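/- arXiv:2404.02021 — 3 statements merged into one kernel-verified Lean document; each statement's English description precedes it below -/
import Mathlib

section
/- For every integer n ≥ 3, the link of the cycle satisfies m_pair(L_n^(3)) = 1/2 if n is odd, and m_pair(L_n^(3)) = 1/3 if n is even. -/
/-- A 3-uniform hypergraph on a finite subset of `ℕ`. -/
structure ThreeGraph where
  verts : Finset ℕ
  edges : Finset (Finset ℕ)
  card_eq : ∀ e ∈ edges, e.card = 3
  subset_verts : ∀ e ∈ edges, e ⊆ verts

/-- `χ` (on 3-element subsets of `{0, …, N-1}`) contains a copy of `H` in color `c`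
(`true` = red, `false` = blue). -/
def hasMonoCopy (N : ℕ) (χ : Finset ℕ → Bool) (H : ThreeGraph) (c : Bool) : Prop :=
  ∃ φ : ℕ → ℕ, Set.InjOn φ ↑H.verts ∧ (∀ v ∈ H.verts, φ v < N) ∧
    ∀ e ∈ H.edges, χ (e.image φ) = c

/-- The Ramsey number `r(G, H)`: the least `N` such that every red/blue coloring of the
triples of an `N`-element set contains a red copy of `G` or a blue copy of `H`. -/
noncomputable def ramsey (G H : ThreeGraph) : ℕ :=
  sInf {N : ℕ | ∀ χ : Finset ℕ → Bool,
    hasMonoCopy N χ G true ∨ hasMonoCopy N χ H false}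

/-- The complete tripartite 3-graph `K_{a,b,c}^{(3)}`. -/
def tripartite (a b c : ℕ) : ThreeGraph where
  verts := Finset.range (a + b + c)
  edges := ((Finset.range (a + b + c)).powersetCard 3).filter (fun e =>
    (e.filter (fun x => x < a)).card = 1 ∧
    (e.filter (fun x => a ≤ x ∧ x < a + b)).card = 1 ∧
    (e.filter (fun x => a + b ≤ x)).card = 1)
  card_eq := fun e he => (Finset.mem_powersetCard.mp (Finset.mem_filter.mp he).1).2
  subset_verts := fun e he => (Finset.mem_powersetCard.mp (Finset.mem_filter.mp he).1).1

/-- The complete 3-graph `K_n^{(3)}`. -/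
def completeTG (n : ℕ) : ThreeGraph where
  verts := Finset.range n
  edges := (Finset.range n).powersetCard 3
  card_eq := fun e he => (Finset.mem_powersetCard.mp he).2
  subset_verts := fun e he => (Finset.mem_powersetCard.mp he).1

/-- The shadow of a set of 3-edges: all 2-element subsets of its edges. -/
def shadowOf (E : Finset (Finset ℕ)) : Finset (Finset ℕ) :=
  E.biUnion (fun e => e.powersetCard 2)

/-- An oriented 3-graph (given by its edge set of ordered triples): it contains at most one of
the six coordinate permutations of any ordered triple and no triple with a repeated
coordinate. -/
def Oriented (E : Set (ℕ × ℕ × ℕ)) : Prop :=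
  ∀ a b c : ℕ, (a, b, c) ∈ E →
    (a ≠ b ∧ b ≠ c ∧ a ≠ c) ∧
    (a, c, b) ∉ E ∧ (b, a, c) ∉ E ∧ (b, c, a) ∉ E ∧ (c, a, b) ∉ E ∧ (c, b, a) ∉ E

/-- `f` is a pair homomorphism from `H`, ordered by the (injective on `V(H)`) function `ord`,
to the oriented 3-graph with edge set `E`. -/
def IsPairHom (H : ThreeGraph) (ord : ℕ → ℕ) (E : Set (ℕ × ℕ × ℕ))
    (f : Finset ℕ → ℕ) : Prop :=
  Set.InjOn ord ↑H.verts ∧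
  ∀ e ∈ H.edges, ∀ u v w : ℕ, e = {u, v, w} → ord u < ord v → ord v < ord w →
    (f {u, v} ≠ f {v, w} ∧ f {v, w} ≠ f {u, w} ∧ f {u, v} ≠ f {u, w}) ∧
    (f {u, v}, f {v, w}, f {u, w}) ∈ E

/-- `v(f(H'))` for the subhypergraph with edge set `E'`: the number of vertices of the image,
i.e. the size of the image of the shadow of `E'` under `f`. -/
def imageVerts (f : Finset ℕ → ℕ) (E' : Finset (Finset ℕ)) : ℕ :=
  ((shadowOf E').image f).card

/-- `e(f(H'))` for the subhypergraph with edge set `E'`: the number of distinct image triples. -/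
noncomputable def imageEdges (ord : ℕ → ℕ) (f : Finset ℕ → ℕ)
    (E' : Finset (Finset ℕ)) : ℕ :=
  Set.ncard {p : ℕ × ℕ × ℕ | ∃ e ∈ E', ∃ u v w : ℕ,
    e = ({u, v, w} : Finset ℕ) ∧ ord u < ord v ∧ ord v < ord w ∧
    p = (f {u, v}, f {v, w}, f {u, w})}

/-- The pair density `m_pair(H)`: the minimum, over all orderings of `V(H)` and all pair
homomorphisms `f` from `H` to any oriented 3-graph, of the maximum over all nonempty
subhypergraphs `H' ⊆ H` of `e(f(H')) / v(f(H'))`. -/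
noncomputable def mpair (H : ThreeGraph) : ℝ :=
  sInf {q : ℝ | ∃ (ord : ℕ → ℕ) (E : Set (ℕ × ℕ × ℕ)) (f : Finset ℕ → ℕ),
    Oriented E ∧ IsPairHom H ord E f ∧
    q = sSup {r : ℝ | ∃ E' : Finset (Finset ℕ), E' ⊆ H.edges ∧ E'.Nonempty ∧
      r = (imageEdges ord f E' : ℝ) / (imageVerts f E' : ℝ)}}

/-- The set of 3-edges `E` contains a Berge cycle: `t ≥ 2` distinct vertices and `t` distinct
edges with `v i, v (i+1) ∈ e i` cyclically. -/
def HasBergeCycle (E : Set (Finset ℕ)) : Prop :=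
  ∃ t : ℕ, 2 ≤ t ∧ ∃ (v : ZMod t → ℕ) (e : ZMod t → Finset ℕ),
    Function.Injective v ∧ Function.Injective e ∧
    ∀ i : ZMod t, e i ∈ E ∧ v i ∈ e i ∧ v (i + 1) ∈ e i

/-- `H` is avoidable: for every ordering and every pair homomorphism `f` from `H` to an
oriented 3-graph, the 3-graph of underlying vertex sets of the image edges has a Berge cycle. -/
def Avoidable (H : ThreeGraph) : Prop :=
  ∀ (ord : ℕ → ℕ) (E : Set (ℕ × ℕ × ℕ)) (f : Finset ℕ → ℕ),
    Oriented E → IsPairHom H ord E f →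
    HasBergeCycle {s : Finset ℕ | ∃ e ∈ H.edges, ∃ u v w : ℕ,
      e = ({u, v, w} : Finset ℕ) ∧ ord u < ord v ∧ ord v < ord w ∧
      s = ({f {u, v}, f {v, w}, f {u, w}} : Finset ℕ)}

/-- A linear 3-graph: any two distinct edges share at most one vertex. -/
def LinearTG (F : ThreeGraph) : Prop :=
  ∀ e₁ ∈ F.edges, ∀ e₂ ∈ F.edges, e₁ ≠ e₂ → (e₁ ∩ e₂).card ≤ 1
/-- The link of the cycle, `L_n^{(3)}`: vertex set `{0,…,n-1} ∪ {n}` where `{0,…,n-1}` stands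
for `ℤ/n` and `n` plays the rôle of the new center vertex `x`; edges `{x, k, k+1}` with
arithmetic modulo `n`. -/
def linkCycle (n : ℕ) : ThreeGraph where
  verts := insert n (Finset.range n)
  edges := ((insert n (Finset.range n)).powersetCard 3).filter (fun e =>
    ∃ k < n, e = ({n, k, (k + 1) % n} : Finset ℕ))
  card_eq := fun e he => (Finset.mem_powersetCard.mp (Finset.mem_filter.mp he).1).2
  subset_verts := fun e he => (Finset.mem_powersetCard.mp (Finset.mem_filter.mp he).1).1

namespace MP

/-- successor on the cycle -/
def nxt (n k : ℕ) : ℕ := (k + 1) % n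

/-- the edge of the link-cycle -/
def eF (n k : ℕ) : Finset ℕ := {n, k, nxt n k}

lemma nxt_lt {n k : ℕ} (hn : 3 ≤ n) : nxt n k < n := Nat.mod_lt _ (by omega)

lemma nxt_ne {n k : ℕ} (hn : 3 ≤ n) (hk : k < n) : nxt n k ≠ k := by
  unfold nxt
  rcases Nat.lt_or_ge (k+1) n with h | h
  · rw [Nat.mod_eq_of_lt h]; omega
  · have : k + 1 = n := by omega
    rw [this, Nat.mod_self]; omega

lemma nxt_eq_iff {n k m : ℕ} (hn : 3 ≤ n) (hk : k < n) (hm : m < n) :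
    nxt n k = m ↔ (k + 1 = m ∨ (k + 1 = n ∧ m = 0)) := by
  unfold nxt
  rcases Nat.lt_or_ge (k+1) n with h | h
  · rw [Nat.mod_eq_of_lt h]; omega
  · have : k + 1 = n := by omega
    rw [this, Nat.mod_self]; omega

lemma mem_pair_iff {a x y : ℕ} : a ∈ ({x, y} : Finset ℕ) ↔ a = x ∨ a = y := by
  simp

lemma mem_triple_iff {a x y z : ℕ} : a ∈ ({x, y, z} : Finset ℕ) ↔ a = x ∨ a = y ∨ a = z := by
  simp

lemma triple_card {x y z : ℕ} (h1 : x ≠ y) (h2 : x ≠ z) (h3 : y ≠ z) :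
    ({x, y, z} : Finset ℕ).card = 3 := by
  rw [Finset.card_insert_of_notMem (by simp [h1, h2]),
      Finset.card_insert_of_notMem (by simp [h3]), Finset.card_singleton]

lemma triple_ext {x y z x' y' z' : ℕ}
    (h : ∀ a, (a = x ∨ a = y ∨ a = z) ↔ (a = x' ∨ a = y' ∨ a = z')) :
    ({x, y, z} : Finset ℕ) = {x', y', z'} := by
  ext a; simp only [mem_triple_iff]; exact h a

lemma eF_distinct {n k : ℕ} (hn : 3 ≤ n) (hk : k < n) :
    n ≠ k ∧ n ≠ nxt n k ∧ k ≠ nxt n k := by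
  refine ⟨by omega, ?_, (nxt_ne hn hk).symm⟩
  have := nxt_lt (k := k) hn; omega

lemma eF_card {n k : ℕ} (hn : 3 ≤ n) (hk : k < n) : (eF n k).card = 3 := by
  obtain ⟨h1, h2, h3⟩ := eF_distinct hn hk
  exact triple_card h1 h2 h3

lemma edges_eq {n : ℕ} (hn : 3 ≤ n) :
    (linkCycle n).edges = (Finset.range n).image (eF n) := by
  ext e
  simp only [linkCycle, Finset.mem_filter, Finset.mem_powersetCard, Finset.mem_image,
    Finset.mem_range]
  constructor
  · rintro ⟨-, k, hk, rfl⟩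
    exact ⟨k, hk, rfl⟩
  · rintro ⟨k, hk, rfl⟩
    refine ⟨⟨?_, eF_card hn hk⟩, ⟨k, hk, rfl⟩⟩
    intro a ha
    rw [eF, mem_triple_iff] at ha
    have := nxt_lt (n := n) (k := k) hn
    rcases ha with rfl | rfl | rfl <;> simp [Finset.mem_insert, Finset.mem_range] <;> omega

lemma edges_nonempty {n : ℕ} (hn : 3 ≤ n) : (linkCycle n).edges.Nonempty := by
  rw [edges_eq hn]
  exact ⟨eF n 0, Finset.mem_image.2 ⟨0, by simp; omega, rfl⟩⟩

lemma nxt_inj {n k m : ℕ} (hn : 3 ≤ n) (hk : k < n) (hm : m < n) (h : nxt n k = nxt n m) :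
    k = m := by
  have hv : nxt n m < n := nxt_lt hn
  have h1 := (nxt_eq_iff hn hk hv).1 h
  have h2 := (nxt_eq_iff hn hm hv).1 rfl
  omega

/-- the rim pair determines k -/
lemma rim_inj {n k m : ℕ} (hn : 3 ≤ n) (hk : k < n) (hm : m < n)
    (h : ({k, nxt n k} : Finset ℕ) = {m, nxt n m}) : k = m := by
  have h1 : k ∈ ({m, nxt n m} : Finset ℕ) := by rw [← h]; simp
  have h2 : m ∈ ({k, nxt n k} : Finset ℕ) := by rw [h]; simp
  rw [mem_pair_iff] at h1 h2
  rcases h1 with rfl | h1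
  · rfl
  · rcases h2 with rfl | h2
    · rfl
    · exfalso
      have h1' := (nxt_eq_iff hn hm hk).1 h1.symm
      have h2' := (nxt_eq_iff hn hk hm).1 h2.symm
      omega

lemma eF_inj {n k m : ℕ} (hn : 3 ≤ n) (hk : k < n) (hm : m < n)
    (h : eF n k = eF n m) : k = m := by
  have hme : ∀ j, j < n → ({n, j, nxt n j} : Finset ℕ).erase n = {j, nxt n j} := by
    intro j hj
    rw [Finset.erase_insert]
    rw [mem_pair_iff]
    have := nxt_lt (n := n) (k := j) hn
    omega
  apply rim_inj hn hk hm
  rw [← hme k hk, ← hme m hm]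
  unfold eF at h
  rw [h]

end MP
namespace MP

variable (n : ℕ) (ord : ℕ → ℕ) (f : Finset ℕ → ℕ)

/-- spoke image value -/
def av (k : ℕ) : ℕ := f {n, k}
/-- rim image value -/
def bv (k : ℕ) : ℕ := f {k, nxt n k}

/-- the ordered image triple of edge `k` -/
noncomputable def Tt (k : ℕ) : ℕ × ℕ × ℕ :=
  if ord n < ord k then
    (if ord n < ord (nxt n k) then
      (if ord k < ord (nxt n k) then (av n f k, bv n f k, av n f (nxt n k))
       else (av n f (nxt n k), bv n f k, av n f k))
     else (av n f (nxt n k), av n f k, bv n f k))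
  else
    (if ord n < ord (nxt n k) then (av n f k, av n f (nxt n k), bv n f k)
     else (if ord k < ord (nxt n k) then (bv n f k, av n f (nxt n k), av n f k)
           else (bv n f k, av n f k, av n f (nxt n k))))

/-- the image vertex set of edge `k` -/
noncomputable def Sv (k : ℕ) : Finset ℕ :=
  {(Tt n ord f k).1, (Tt n ord f k).2.1, (Tt n ord f k).2.2}

lemma mem_verts {n k : ℕ} (hk : k < n) : k ∈ (linkCycle n).verts := by
  simp [linkCycle, hk]

lemma self_mem_verts {n : ℕ} : n ∈ (linkCycle n).verts := by simp [linkCycle]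

section
variable {n : ℕ} {ord : ℕ → ℕ} {f : Finset ℕ → ℕ}
  (hn : 3 ≤ n) (hinj : Set.InjOn ord ↑(linkCycle n).verts)

include hn hinj

lemma ord_distinct {k : ℕ} (hk : k < n) :
    ord n ≠ ord k ∧ ord n ≠ ord (nxt n k) ∧ ord k ≠ ord (nxt n k) := by
  obtain ⟨h1, h2, h3⟩ := eF_distinct hn hk
  have hkv := mem_verts hk
  have hkv' := mem_verts (nxt_lt hn : nxt n k < n)
  have hnv := self_mem_verts (n := n)
  exact ⟨fun h => h1 (hinj hnv hkv h), fun h => h2 (hinj hnv hkv' h),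
    fun h => h3 (hinj hkv hkv' h)⟩

/-- existence of a sorted decomposition realizing `Tt` -/
lemma sorted_exists {k : ℕ} (hk : k < n) :
    ∃ u v w : ℕ, eF n k = {u, v, w} ∧ ord u < ord v ∧ ord v < ord w ∧
      (f {u, v}, f {v, w}, f {u, w}) = Tt n ord f k := by
  obtain ⟨hd1, hd2, hd3⟩ := ord_distinct hn hinj hk
  set x := n
  set y := k
  set z := nxt n k with hz
  have hz' : nxt x y = z := rfl
  rcases Nat.lt_or_ge (ord x) (ord y) with hxy | hxy
  · rcases Nat.lt_or_ge (ord x) (ord z) with hxz | hxz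
    · rcases Nat.lt_or_ge (ord y) (ord z) with hyz | hyz
      · exact ⟨x, y, z, rfl, hxy, hyz, by
          simp only [Tt, hz', if_pos hxy, if_pos hxz, if_pos hyz]; rfl⟩
      · refine ⟨x, z, y, ?_, hxz, by omega, by
          simp only [Tt, hz', if_pos hxy, if_pos hxz, if_neg (by omega : ¬ ord y < ord z)]
          rw [Finset.pair_comm z y]; rfl⟩
        exact triple_ext (by tauto)
    · -- y H, z L : z < x < y
      refine ⟨z, x, y, ?_, by omega, hxy, by
        simp only [Tt, hz', if_pos hxy, if_neg (by omega : ¬ ord x < ord z)]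
        rw [Finset.pair_comm z x, Finset.pair_comm z y]; rfl⟩
      exact triple_ext (by tauto)
  · rcases Nat.lt_or_ge (ord x) (ord z) with hxz | hxz
    · -- y L, z H : y < x < z
      refine ⟨y, x, z, ?_, by omega, hxz, by
        simp only [Tt, hz', if_neg (by omega : ¬ ord x < ord y), if_pos hxz]
        rw [Finset.pair_comm y x]; rfl⟩
      exact triple_ext (by tauto)
    · rcases Nat.lt_or_ge (ord y) (ord z) with hyz | hyz
      · refine ⟨y, z, x, ?_, hyz, by omega, by
          simp only [Tt, hz', if_neg (by omega : ¬ ord x < ord y),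
            if_neg (by omega : ¬ ord x < ord z), if_pos hyz]
          rw [Finset.pair_comm z x, Finset.pair_comm y x]; rfl⟩
        exact triple_ext (by tauto)
      · refine ⟨z, y, x, ?_, by omega, by omega, by
          simp only [Tt, hz', if_neg (by omega : ¬ ord x < ord y),
            if_neg (by omega : ¬ ord x < ord z), if_neg (by omega : ¬ ord y < ord z)]
          rw [Finset.pair_comm z y, Finset.pair_comm z x, Finset.pair_comm y x]; rfl⟩
        exact triple_ext (by tauto)

omit hn hinj in
/-- uniqueness of a sorted decomposition of a triple -/
lemma sorted_unique {u v w u' v' w' : ℕ}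
    (h : ({u, v, w} : Finset ℕ) = {u', v', w'})
    (h1 : ord u < ord v) (h2 : ord v < ord w)
    (h1' : ord u' < ord v') (h2' : ord v' < ord w') :
    u = u' ∧ v = v' ∧ w = w' := by
  have hu : u' = u ∨ u' = v ∨ u' = w := by
    have : u' ∈ ({u, v, w} : Finset ℕ) := by rw [h]; simp
    rwa [mem_triple_iff] at this
  have hv : v' = u ∨ v' = v ∨ v' = w := by
    have : v' ∈ ({u, v, w} : Finset ℕ) := by rw [h]; simp
    rwa [mem_triple_iff] at this
  have hw : w' = u ∨ w' = v ∨ w' = w := by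
    have : w' ∈ ({u, v, w} : Finset ℕ) := by rw [h]; simp
    rwa [mem_triple_iff] at this
  have hu2 : u = u' ∨ u = v' ∨ u = w' := by
    have : u ∈ ({u', v', w'} : Finset ℕ) := by rw [← h]; simp
    rwa [mem_triple_iff] at this
  have hw2 : w = u' ∨ w = v' ∨ w = w' := by
    have : w ∈ ({u', v', w'} : Finset ℕ) := by rw [← h]; simp
    rwa [mem_triple_iff] at this
  rcases hu with rfl | rfl | rfl <;> rcases hv with rfl | rfl | rfl <;>
    rcases hw with rfl | rfl | rfl <;> refine ⟨?_, ?_, ?_⟩ <;> omega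

include hn hinj in
/-- every sorted decomposition gives the value `Tt` -/
lemma sorted_val {k u v w : ℕ} (hk : k < n) (he : eF n k = {u, v, w})
    (h1 : ord u < ord v) (h2 : ord v < ord w) :
    (f {u, v}, f {v, w}, f {u, w}) = Tt n ord f k := by
  obtain ⟨u0, v0, w0, he0, h10, h20, hval⟩ := sorted_exists hn hinj hk
  obtain ⟨rfl, rfl, rfl⟩ := sorted_unique (ord := ord) (he0.symm.trans he) h10 h20 h1 h2
  exact hval

end

end MP
namespace MP

section
variable {n : ℕ} {ord : ℕ → ℕ} {E : Set (ℕ × ℕ × ℕ)} {f : Finset ℕ → ℕ}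
  (hn : 3 ≤ n) (hOr : Oriented E) (hHom : IsPairHom (linkCycle n) ord E f)

lemma eF_mem_edges (hn : 3 ≤ n) {k : ℕ} (hk : k < n) : eF n k ∈ (linkCycle n).edges := by
  rw [edges_eq hn]
  exact Finset.mem_image.2 ⟨k, Finset.mem_range.2 hk, rfl⟩

include hn hHom

lemma Tt_spec {k : ℕ} (hk : k < n) :
    Tt n ord f k ∈ E ∧ (Tt n ord f k).1 ≠ (Tt n ord f k).2.1 ∧
    (Tt n ord f k).2.1 ≠ (Tt n ord f k).2.2 ∧ (Tt n ord f k).1 ≠ (Tt n ord f k).2.2 := by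
  obtain ⟨u, v, w, he, h1, h2, hval⟩ := sorted_exists (f := f) hn hHom.1 hk
  obtain ⟨hd, hmem⟩ := hHom.2 (eF n k) (eF_mem_edges hn hk) u v w he h1 h2
  rw [← hval]
  exact ⟨hmem, hd.1, hd.2.1, hd.2.2⟩

lemma Sv_eq {k : ℕ} (hk : k < n) :
    Sv n ord f k = {av n f k, av n f (nxt n k), bv n f k} := by
  unfold Sv Tt
  split_ifs <;> exact triple_ext (by tauto)

lemma av_mem_Sv {k : ℕ} (hk : k < n) : av n f k ∈ Sv n ord f k := by
  rw [Sv_eq hn hHom hk]; simp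

lemma av_nxt_mem_Sv {k : ℕ} (hk : k < n) : av n f (nxt n k) ∈ Sv n ord f k := by
  rw [Sv_eq hn hHom hk]; simp

lemma Sv_card {k : ℕ} (hk : k < n) : (Sv n ord f k).card = 3 := by
  obtain ⟨-, hd1, hd2, hd3⟩ := Tt_spec hn hHom hk
  exact triple_card hd1 hd3 hd2

include hOr in
lemma Tt_eq_of_Sv_eq {j k : ℕ} (hj : j < n) (hk : k < n)
    (h : Sv n ord f j = Sv n ord f k) : Tt n ord f j = Tt n ord f k := by
  obtain ⟨hEj, d1, d2, d3⟩ := Tt_spec hn hHom hj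
  obtain ⟨hEk, e1, e2, e3⟩ := Tt_spec hn hHom hk
  obtain ⟨p1, p2, p3, hTj⟩ : ∃ p1 p2 p3, Tt n ord f j = (p1, p2, p3) := ⟨_, _, _, rfl⟩
  obtain ⟨q1, q2, q3, hTk⟩ : ∃ q1 q2 q3, Tt n ord f k = (q1, q2, q3) := ⟨_, _, _, rfl⟩
  rw [hTj] at hEj d1 d2 d3
  rw [hTk] at hEk e1 e2 e3
  rw [hTj, hTk]
  simp only at d1 d2 d3 e1 e2 e3
  have hS : ({p1, p2, p3} : Finset ℕ) = {q1, q2, q3} := by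
    have := h; unfold Sv at this; rw [hTj, hTk] at this; exact this
  have h1 : q1 = p1 ∨ q1 = p2 ∨ q1 = p3 := by
    have : q1 ∈ ({p1, p2, p3} : Finset ℕ) := by rw [hS]; simp
    rwa [mem_triple_iff] at this
  have h2 : q2 = p1 ∨ q2 = p2 ∨ q2 = p3 := by
    have : q2 ∈ ({p1, p2, p3} : Finset ℕ) := by rw [hS]; simp
    rwa [mem_triple_iff] at this
  have h3 : q3 = p1 ∨ q3 = p2 ∨ q3 = p3 := by
    have : q3 ∈ ({p1, p2, p3} : Finset ℕ) := by rw [hS]; simp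
    rwa [mem_triple_iff] at this
  obtain ⟨-, hA, hB, hC, hD, hE⟩ := hOr p1 p2 p3 hEj
  rcases h1 with rfl | rfl | rfl <;> rcases h2 with rfl | rfl | rfl <;>
    rcases h3 with rfl | rfl | rfl <;>
    first
      | rfl
      | omega
      | (exact absurd hEk (by assumption))

end

lemma powersetCard_two {x y z : ℕ} (h1 : x ≠ y) (h2 : x ≠ z) (h3 : y ≠ z) :
    ({x, y, z} : Finset ℕ).powersetCard 2 = {{x, y}, {x, z}, {y, z}} := by
  ext t
  simp only [Finset.mem_powersetCard, mem_triple_iff, Finset.mem_insert, Finset.mem_singleton]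
  constructor
  · rintro ⟨hsub, hcard⟩
    obtain ⟨p, q, hpq, rfl⟩ := Finset.card_eq_two.1 hcard
    have hp : p = x ∨ p = y ∨ p = z := by
      have := hsub (Finset.mem_insert_self p {q}); rwa [mem_triple_iff] at this
    have hq : q = x ∨ q = y ∨ q = z := by
      have := hsub (by simp : q ∈ ({p, q} : Finset ℕ)); rwa [mem_triple_iff] at this
    rcases hp with rfl | rfl | rfl <;> rcases hq with rfl | rfl | rfl <;>
      first
        | exact absurd rfl hpq
        | (left; rfl)
        | (right; left; rfl)
        | (right; right; rfl)
        | (left; exact Finset.pair_comm _ _)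
        | (right; left; exact Finset.pair_comm _ _)
        | (right; right; exact Finset.pair_comm _ _)
  · rintro (rfl | rfl | rfl)
    · exact ⟨by intro a ha; rw [mem_pair_iff] at ha; rw [mem_triple_iff]; tauto,
        Finset.card_pair h1⟩
    · exact ⟨by intro a ha; rw [mem_pair_iff] at ha; rw [mem_triple_iff]; tauto,
        Finset.card_pair h2⟩
    · exact ⟨by intro a ha; rw [mem_pair_iff] at ha; rw [mem_triple_iff]; tauto,
        Finset.card_pair h3⟩

end MP
namespace MP

/-- the set of ratios of a pair homomorphism, as in `mpair` -/
def ratioSet (n : ℕ) (ord : ℕ → ℕ) (f : Finset ℕ → ℕ) : Set ℝ :=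
  {r : ℝ | ∃ E' : Finset (Finset ℕ), E' ⊆ (linkCycle n).edges ∧ E'.Nonempty ∧
      r = (imageEdges ord f E' : ℝ) / (imageVerts f E' : ℝ)}

section
variable {n : ℕ} {ord : ℕ → ℕ} {f : Finset ℕ → ℕ}
  (hn : 3 ≤ n) (hinj : Set.InjOn ord ↑(linkCycle n).verts)

include hn

lemma subset_decomp {E' : Finset (Finset ℕ)} (hE : E' ⊆ (linkCycle n).edges) :
    ∃ K : Finset ℕ, K ⊆ Finset.range n ∧ E' = K.image (eF n) ∧
      (E'.Nonempty ↔ K.Nonempty) := by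
  refine ⟨(Finset.range n).filter (fun k => eF n k ∈ E'), Finset.filter_subset _ _, ?_, ?_⟩
  · ext e
    simp only [Finset.mem_image, Finset.mem_filter, Finset.mem_range]
    constructor
    · intro he
      have := hE he
      rw [edges_eq hn] at this
      obtain ⟨k, hk, rfl⟩ := Finset.mem_image.1 this
      exact ⟨k, ⟨Finset.mem_range.1 hk, he⟩, rfl⟩
    · rintro ⟨k, ⟨-, hk⟩, rfl⟩; exact hk
  · constructor
    · rintro ⟨e, he⟩
      have := hE he
      rw [edges_eq hn] at this
      obtain ⟨k, hk, rfl⟩ := Finset.mem_image.1 this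
      exact ⟨k, Finset.mem_filter.2 ⟨hk, he⟩⟩
    · rintro ⟨k, hk⟩
      rw [Finset.mem_filter] at hk
      exact ⟨eF n k, hk.2⟩

include hinj

lemma imageEdges_eq {K : Finset ℕ} (hK : K ⊆ Finset.range n) :
    imageEdges ord f (K.image (eF n)) = (K.image (Tt n ord f)).card := by
  unfold imageEdges
  have : {p : ℕ × ℕ × ℕ | ∃ e ∈ K.image (eF n), ∃ u v w : ℕ,
      e = ({u, v, w} : Finset ℕ) ∧ ord u < ord v ∧ ord v < ord w ∧
      p = (f {u, v}, f {v, w}, f {u, w})} = ↑(K.image (Tt n ord f)) := by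
    ext p
    simp only [Set.mem_setOf_eq, Finset.coe_image, Set.mem_image, Finset.mem_coe,
      Finset.mem_image]
    constructor
    · rintro ⟨e, ⟨k, hkK, rfl⟩, u, v, w, hdec, h1, h2, rfl⟩
      have hk : k < n := Finset.mem_range.1 (hK hkK)
      exact ⟨k, hkK, (sorted_val hn hinj hk hdec h1 h2).symm⟩
    · rintro ⟨k, hkK, rfl⟩
      have hk : k < n := Finset.mem_range.1 (hK hkK)
      obtain ⟨u, v, w, he, h1, h2, hval⟩ := sorted_exists (f := f) hn hinj hk
      exact ⟨eF n k, ⟨k, hkK, rfl⟩, u, v, w, he, h1, h2, hval.symm⟩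
  rw [this, Set.ncard_coe_finset]

lemma imageVerts_eq {K : Finset ℕ} (hK : K ⊆ Finset.range n) :
    imageVerts f (K.image (eF n)) = (K.biUnion (Sv n ord f)).card := by
  unfold imageVerts shadowOf
  rw [Finset.biUnion_image, Finset.image_biUnion]
  congr 1
  apply Finset.biUnion_congr rfl
  intro k hkK
  have hk : k < n := Finset.mem_range.1 (hK hkK)
  obtain ⟨h1, h2, h3⟩ := eF_distinct hn hk
  rw [show eF n k = {n, k, nxt n k} from rfl, powersetCard_two h1 h2 h3]
  rw [Finset.image_insert, Finset.image_insert, Finset.image_singleton]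
  have hSv : Sv n ord f k = {av n f k, av n f (nxt n k), bv n f k} := by
    unfold Sv Tt
    split_ifs <;> exact triple_ext (by tauto)
  rw [hSv]
  rfl

/-- description of the ratio set in terms of index sets -/
lemma ratioSet_eq :
    ratioSet n ord f = {r : ℝ | ∃ K : Finset ℕ, K ⊆ Finset.range n ∧ K.Nonempty ∧
      r = ((K.image (Tt n ord f)).card : ℝ) / ((K.biUnion (Sv n ord f)).card : ℝ)} := by
  ext r
  simp only [ratioSet, Set.mem_setOf_eq]
  constructor
  · rintro ⟨E', hE, hne, rfl⟩
    obtain ⟨K, hK, rfl, hiff⟩ := subset_decomp hn hE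
    exact ⟨K, hK, hiff.1 hne, by rw [imageEdges_eq hn hinj hK, imageVerts_eq hn hinj hK]⟩
  · rintro ⟨K, hK, hne, rfl⟩
    refine ⟨K.image (eF n), ?_, ?_, ?_⟩
    · intro e he
      obtain ⟨k, hk, rfl⟩ := Finset.mem_image.1 he
      exact eF_mem_edges hn (Finset.mem_range.1 (hK hk))
    · obtain ⟨k, hk⟩ := hne
      exact ⟨eF n k, Finset.mem_image.2 ⟨k, hk, rfl⟩⟩
    · rw [imageEdges_eq hn hinj hK, imageVerts_eq hn hinj hK]

end

end MP
namespace MP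

lemma Sv_eq0 (n : ℕ) (ord : ℕ → ℕ) (f : Finset ℕ → ℕ) (k : ℕ) :
    Sv n ord f k = {av n f k, av n f (nxt n k), bv n f k} := by
  unfold Sv Tt
  split_ifs <;> exact triple_ext (by tauto)

lemma ratio_le_half {e v : ℕ} (h : 2 * e ≤ v) : (e : ℝ) / v ≤ 1 / 2 := by
  rcases Nat.eq_zero_or_pos v with rfl | hv
  · simp
  · rw [div_le_div_iff₀ (by positivity) (by norm_num)]
    push_cast
    have : (2 : ℝ) * e ≤ v := by exact_mod_cast h
    linarith

lemma ratio_ge_half {e v : ℕ} (h : v ≤ 2 * e) (hv : 1 ≤ v) : (1 : ℝ) / 2 ≤ (e : ℝ) / v := by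
  rw [div_le_div_iff₀ (by norm_num) (by positivity : (0:ℝ) < v)]
  have : (v : ℝ) ≤ 2 * e := by exact_mod_cast h
  linarith

lemma ratio_ge_third {e v : ℕ} (h : v ≤ 3 * e) (hv : 1 ≤ v) : (1 : ℝ) / 3 ≤ (e : ℝ) / v := by
  rw [div_le_div_iff₀ (by norm_num) (by positivity : (0:ℝ) < v)]
  have : (v : ℝ) ≤ 3 * e := by exact_mod_cast h
  linarith

lemma ratio_le_self {e v : ℕ} (hv : 1 ≤ v) : (e : ℝ) / v ≤ e := by
  exact div_le_self (by positivity) (by exact_mod_cast hv)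

end MP
namespace MP

/-- the injective pair-labelling -/
def fenc : Finset ℕ → ℕ := fun s => Encodable.encode s

lemma fenc_inj : Function.Injective fenc := Encodable.encode_injective

lemma hinj_id {n : ℕ} : Set.InjOn (id : ℕ → ℕ) ↑(linkCycle n).verts :=
  fun _ _ _ _ h => h

lemma spoke_inj {n j k : ℕ} (hj : j < n) (hk : k < n)
    (h : ({n, j} : Finset ℕ) = {n, k}) : j = k := by
  have : j ∈ ({n, k} : Finset ℕ) := by rw [← h]; simp
  rw [mem_pair_iff] at this
  omega

lemma spoke_ne_rim {n j k : ℕ} (hn : 3 ≤ n) (hj : j < n) (hk : k < n) :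
    ({n, j} : Finset ℕ) ≠ {k, nxt n k} := by
  intro h
  have : n ∈ ({k, nxt n k} : Finset ℕ) := by rw [← h]; simp
  rw [mem_pair_iff] at this
  have := nxt_lt (n := n) (k := k) hn
  omega

lemma av_inj {n j k : ℕ} (hj : j < n) (hk : k < n)
    (h : av n fenc j = av n fenc k) : j = k :=
  spoke_inj hj hk (fenc_inj h)

lemma bv_inj {n j k : ℕ} (hn : 3 ≤ n) (hj : j < n) (hk : k < n)
    (h : bv n fenc j = bv n fenc k) : j = k :=
  rim_inj hn hj hk (fenc_inj h)

lemma av_ne_bv {n j k : ℕ} (hn : 3 ≤ n) (hj : j < n) (hk : k < n) :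
    av n fenc j ≠ bv n fenc k :=
  fun h => spoke_ne_rim hn hj hk (fenc_inj h)

/-- structure of the triple for the identity order -/
lemma Tt_id {n : ℕ} (f : Finset ℕ → ℕ) {k : ℕ} (hn : 3 ≤ n) (hk : k < n) :
    ∃ j1 j2 : ℕ, ((j1 = k ∧ j2 = nxt n k) ∨ (j1 = nxt n k ∧ j2 = k)) ∧
      Tt n id f k = (bv n f k, av n f j1, av n f j2) := by
  have h1 : ¬ (id n < id k) := by simp only [id_eq]; omega
  have h2 : ¬ (id n < id (nxt n k)) := by
    simp only [id_eq]; have := nxt_lt (n := n) (k := k) hn; omega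
  unfold Tt
  rw [if_neg h1, if_neg h2]
  split_ifs with h3
  · exact ⟨nxt n k, k, Or.inr ⟨rfl, rfl⟩, rfl⟩
  · exact ⟨k, nxt n k, Or.inl ⟨rfl, rfl⟩, rfl⟩

/-- the oriented graph for the odd upper bound -/
def Eodd (n : ℕ) : Set (ℕ × ℕ × ℕ) := {p | ∃ k, k < n ∧ Tt n id fenc k = p}

lemma Eodd_oriented {n : ℕ} (hn : 3 ≤ n) : Oriented (Eodd n) := by
  intro a b c ⟨k, hk, hT⟩
  obtain ⟨j1, j2, hj, hrep⟩ := Tt_id fenc hn hk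
  have hnl := nxt_lt (n := n) (k := k) hn
  have hne := nxt_ne hn hk
  have hj1 : j1 < n := by rcases hj with ⟨rfl, -⟩ | ⟨rfl, -⟩ <;> omega
  have hj2 : j2 < n := by rcases hj with ⟨-, rfl⟩ | ⟨-, rfl⟩ <;> omega
  have hj12 : j1 ≠ j2 := by rcases hj with ⟨rfl, rfl⟩ | ⟨rfl, rfl⟩ <;> omega
  rw [hrep] at hT
  obtain ⟨rfl, rfl, rfl⟩ : a = bv n fenc k ∧ b = av n fenc j1 ∧ c = av n fenc j2 :=
    ⟨(congrArg Prod.fst hT).symm, (congrArg (fun p => p.2.1) hT).symm,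
      (congrArg (fun p => p.2.2) hT).symm⟩
  have hfst : ∀ m p2 p3, (bv n fenc m, p2, p3) ∈ Eodd n → m < n →
      ∃ i1 i2 : ℕ, i1 < n ∧ i2 < n ∧ p2 = av n fenc i1 ∧ p3 = av n fenc i2 ∧
        Tt n id fenc m = (bv n fenc m, p2, p3) := by
    rintro m p2 p3 ⟨m', hm', hTm⟩ hm
    obtain ⟨i1, i2, hi, hrep'⟩ := Tt_id fenc hn hm'
    have hnl' := nxt_lt (n := n) (k := m') hn
    have hi1 : i1 < n := by rcases hi with ⟨rfl, -⟩ | ⟨rfl, -⟩ <;> omega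
    have hi2 : i2 < n := by rcases hi with ⟨-, rfl⟩ | ⟨-, rfl⟩ <;> omega
    rw [hrep'] at hTm
    have hbv : bv n fenc m' = bv n fenc m := congrArg Prod.fst hTm
    have : m' = m := bv_inj hn hm' hm hbv
    subst this
    have h2 : av n fenc i1 = p2 := congrArg (fun p => p.2.1) hTm
    have h3 : av n fenc i2 = p3 := congrArg (fun p => p.2.2) hTm
    exact ⟨i1, i2, hi1, hi2, h2.symm, h3.symm, by rw [hrep', hTm]⟩
  refine ⟨⟨(av_ne_bv hn hj1 hk).symm, fun h => hj12 (av_inj hj1 hj2 h),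
      fun h => av_ne_bv hn hj2 hk h.symm⟩, ?_, ?_, ?_, ?_, ?_⟩
  · -- (bv k, av j2, av j1) ∉ E
    rintro hmem
    obtain ⟨i1, i2, -, -, h2, h3, hTm⟩ := hfst k _ _ hmem hk
    rw [hrep] at hTm
    have : av n fenc j1 = av n fenc j2 := by
      have := congrArg (fun p => p.2.1) hTm
      simpa using this
    exact hj12 (av_inj hj1 hj2 this)
  · rintro ⟨m, hm, hTm⟩
    obtain ⟨i1, i2, hi, hrep'⟩ := Tt_id fenc hn hm
    rw [hrep'] at hTm
    have : bv n fenc m = av n fenc j1 := congrArg Prod.fst hTm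
    exact av_ne_bv hn hj1 hm this.symm
  · rintro ⟨m, hm, hTm⟩
    obtain ⟨i1, i2, hi, hrep'⟩ := Tt_id fenc hn hm
    rw [hrep'] at hTm
    have : bv n fenc m = av n fenc j1 := congrArg Prod.fst hTm
    exact av_ne_bv hn hj1 hm this.symm
  · rintro ⟨m, hm, hTm⟩
    obtain ⟨i1, i2, hi, hrep'⟩ := Tt_id fenc hn hm
    rw [hrep'] at hTm
    have : bv n fenc m = av n fenc j2 := congrArg Prod.fst hTm
    exact av_ne_bv hn hj2 hm this.symm
  · rintro ⟨m, hm, hTm⟩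
    obtain ⟨i1, i2, hi, hrep'⟩ := Tt_id fenc hn hm
    rw [hrep'] at hTm
    have : bv n fenc m = av n fenc j2 := congrArg Prod.fst hTm
    exact av_ne_bv hn hj2 hm this.symm

lemma hom_odd {n : ℕ} (hn : 3 ≤ n) : IsPairHom (linkCycle n) id (Eodd n) fenc := by
  refine ⟨hinj_id, ?_⟩
  intro e he u v w hdec h1 h2
  rw [edges_eq hn] at he
  obtain ⟨k, hk, rfl⟩ := Finset.mem_image.1 he
  have hk' : k < n := Finset.mem_range.1 hk
  have hval := sorted_val (f := fenc) hn hinj_id hk' hdec h1 h2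
  obtain ⟨j1, j2, hj, hrep⟩ := Tt_id fenc hn hk'
  have hnl := nxt_lt (n := n) (k := k) hn
  have hne := nxt_ne hn hk'
  have hj1 : j1 < n := by rcases hj with ⟨rfl, -⟩ | ⟨rfl, -⟩ <;> omega
  have hj2 : j2 < n := by rcases hj with ⟨-, rfl⟩ | ⟨-, rfl⟩ <;> omega
  have hj12 : j1 ≠ j2 := by rcases hj with ⟨rfl, rfl⟩ | ⟨rfl, rfl⟩ <;> omega
  rw [hrep] at hval
  obtain ⟨e1, e2, e3⟩ : fenc {u, v} = bv n fenc k ∧ fenc {v, w} = av n fenc j1 ∧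
      fenc {u, w} = av n fenc j2 := by
    refine ⟨congrArg Prod.fst hval, ?_, ?_⟩
    · exact congrArg (fun p => p.2.1) hval
    · exact congrArg (fun p => p.2.2) hval
  constructor
  · rw [e1, e2, e3]
    exact ⟨(av_ne_bv hn hj1 hk').symm.symm ∘ Eq.symm, fun h => hj12 (av_inj hj1 hj2 h),
      fun h => av_ne_bv hn hj2 hk' h.symm⟩
  · rw [e1, e2, e3, ← hrep]
    exact ⟨k, hk', rfl⟩

end MP
namespace MP

section
variable {n : ℕ} (hn : 3 ≤ n)
include hn

lemma Tt_id_inj {j k : ℕ} (hj : j < n) (hk : k < n)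
    (h : Tt n id fenc j = Tt n id fenc k) : j = k := by
  obtain ⟨j1, j2, -, hrepj⟩ := Tt_id fenc hn hj
  obtain ⟨k1, k2, -, hrepk⟩ := Tt_id fenc hn hk
  rw [hrepj, hrepk] at h
  exact bv_inj hn hj hk (congrArg Prod.fst h)

lemma eK_odd {K : Finset ℕ} (hK : K ⊆ Finset.range n) :
    (K.image (Tt n id fenc)).card = K.card := by
  rw [Finset.card_image_of_injOn]
  intro j hj k hk h
  exact Tt_id_inj hn (Finset.mem_range.1 (hK hj)) (Finset.mem_range.1 (hK hk)) h

lemma vK_odd_lower {K : Finset ℕ} (hK : K ⊆ Finset.range n) :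
    2 * K.card ≤ (K.biUnion (Sv n id fenc)).card := by
  have hsub : (K.image (av n fenc)) ∪ (K.image (bv n fenc)) ⊆ K.biUnion (Sv n id fenc) := by
    intro x hx
    rw [Finset.mem_union] at hx
    rcases hx with hx | hx <;> obtain ⟨k, hk, rfl⟩ := Finset.mem_image.1 hx <;>
      refine Finset.mem_biUnion.2 ⟨k, hk, ?_⟩ <;> rw [Sv_eq0] <;> simp
  have hdisj : Disjoint (K.image (av n fenc)) (K.image (bv n fenc)) := by
    rw [Finset.disjoint_left]
    rintro x hx hx'
    obtain ⟨j, hj, rfl⟩ := Finset.mem_image.1 hx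
    obtain ⟨k, hk, he⟩ := Finset.mem_image.1 hx'
    exact av_ne_bv hn (Finset.mem_range.1 (hK hj)) (Finset.mem_range.1 (hK hk)) he.symm
  calc 2 * K.card = (K.image (av n fenc)).card + (K.image (bv n fenc)).card := by
        rw [Finset.card_image_of_injOn (fun j hj k hk h =>
          av_inj (Finset.mem_range.1 (hK hj)) (Finset.mem_range.1 (hK hk)) h),
          Finset.card_image_of_injOn (fun j hj k hk h =>
          bv_inj hn (Finset.mem_range.1 (hK hj)) (Finset.mem_range.1 (hK hk)) h)]
        omega
    _ = ((K.image (av n fenc)) ∪ (K.image (bv n fenc))).card :=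
        (Finset.card_union_of_disjoint hdisj).symm
    _ ≤ _ := Finset.card_le_card hsub

lemma vK_odd_full :
    ((Finset.range n).biUnion (Sv n id fenc)).card = 2 * n := by
  have heq : (Finset.range n).biUnion (Sv n id fenc) =
      ((Finset.range n).image (av n fenc)) ∪ ((Finset.range n).image (bv n fenc)) := by
    apply Finset.Subset.antisymm
    · intro x hx
      obtain ⟨k, hk, hx⟩ := Finset.mem_biUnion.1 hx
      rw [Sv_eq0, mem_triple_iff] at hx
      have hk' : k < n := Finset.mem_range.1 hk
      rcases hx with rfl | rfl | rfl
      · exact Finset.mem_union_left _ (Finset.mem_image.2 ⟨k, hk, rfl⟩)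
      · exact Finset.mem_union_left _ (Finset.mem_image.2
          ⟨nxt n k, Finset.mem_range.2 (nxt_lt hn), rfl⟩)
      · exact Finset.mem_union_right _ (Finset.mem_image.2 ⟨k, hk, rfl⟩)
    · intro x hx
      rw [Finset.mem_union] at hx
      rcases hx with hx | hx <;> obtain ⟨k, hk, rfl⟩ := Finset.mem_image.1 hx <;>
        refine Finset.mem_biUnion.2 ⟨k, hk, ?_⟩ <;> rw [Sv_eq0] <;> simp
  rw [heq, Finset.card_union_of_disjoint, Finset.card_image_of_injOn,
    Finset.card_image_of_injOn, Finset.card_range]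
  · omega
  · exact fun j hj k hk h =>
      bv_inj hn (Finset.mem_range.1 hj) (Finset.mem_range.1 hk) h
  · exact fun j hj k hk h =>
      av_inj (Finset.mem_range.1 hj) (Finset.mem_range.1 hk) h
  · rw [Finset.disjoint_left]
    rintro x hx hx'
    obtain ⟨j, hj, rfl⟩ := Finset.mem_image.1 hx
    obtain ⟨k, hk, he⟩ := Finset.mem_image.1 hx'
    exact av_ne_bv hn (Finset.mem_range.1 hj) (Finset.mem_range.1 hk) he.symm

lemma sSup_odd : sSup (ratioSet n id fenc) = 1 / 2 := by
  have hset := ratioSet_eq (f := fenc) hn (hinj_id (n := n))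
  have hub : ∀ r ∈ ratioSet n id fenc, r ≤ 1 / 2 := by
    intro r hr
    rw [hset] at hr
    obtain ⟨K, hK, hne, rfl⟩ := hr
    rw [eK_odd hn hK]
    exact ratio_le_half (vK_odd_lower hn hK)
  have hmem : (1 / 2 : ℝ) ∈ ratioSet n id fenc := by
    rw [hset]
    refine ⟨Finset.range n, le_refl _, ⟨0, Finset.mem_range.2 (by omega)⟩, ?_⟩
    rw [eK_odd hn (le_refl _), vK_odd_full hn, Finset.card_range]
    rw [eq_div_iff (by positivity : ((2 * n : ℕ) : ℝ) ≠ 0)]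
    push_cast
    ring
  exact le_antisymm (csSup_le ⟨_, hmem⟩ hub) (le_csSup ⟨1 / 2, hub⟩ hmem)

end

end MP
namespace MP

/-- order for the even construction: even cycle vertices below `n`, odd ones above -/
def ordE (n : ℕ) : ℕ → ℕ := fun v => if v = n then n else if v % 2 = 0 then v else n + v

/-- pair colouring for the even construction -/
def fE (n : ℕ) : Finset ℕ → ℕ := fun s =>
  if n ∈ s then (if (s.erase n).sum (fun x => x) % 2 = 0 then 0 else 1) else 2

section
variable {n : ℕ} (hn : 3 ≤ n)

lemma verts_cases {a : ℕ} (ha : a ∈ ((linkCycle n).verts : Finset ℕ)) : a = n ∨ a < n := by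
  simp only [linkCycle, Finset.mem_insert, Finset.mem_range] at ha
  exact ha

lemma hinjE : Set.InjOn (ordE n) ↑(linkCycle n).verts := by
  intro a ha b hb h
  have ha' : a = n ∨ a < n := verts_cases (Finset.mem_coe.1 ha)
  have hb' : b = n ∨ b < n := verts_cases (Finset.mem_coe.1 hb)
  unfold ordE at h
  by_cases han : a = n <;> by_cases hbn : b = n
  · rw [han, hbn]
  · rw [if_pos han, if_neg hbn] at h
    split_ifs at h <;> omega
  · rw [if_neg han, if_pos hbn] at h
    split_ifs at h <;> omega
  · rw [if_neg han, if_neg hbn] at h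
    split_ifs at h <;> omega

include hn

lemma avE {k : ℕ} (hk : k < n) : av n (fE n) k = if k % 2 = 0 then 0 else 1 := by
  unfold av fE
  rw [if_pos (by simp)]
  have h : (({n, k} : Finset ℕ).erase n) = {k} := by
    rw [Finset.erase_insert (by rw [Finset.mem_singleton]; omega)]
  rw [h, Finset.sum_singleton]

lemma bvE {k : ℕ} (hk : k < n) : bv n (fE n) k = 2 := by
  unfold bv fE
  rw [if_neg]
  rw [mem_pair_iff]
  have := nxt_lt (n := n) (k := k) hn
  omega

lemma nxt_parity (hE : n % 2 = 0) {k : ℕ} (hk : k < n) :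
    (k % 2 = 0 ↔ ¬ (nxt n k % 2 = 0)) := by
  have h := (nxt_eq_iff (m := nxt n k) hn hk (nxt_lt hn)).1 rfl
  omega

lemma TtE (hE : n % 2 = 0) {k : ℕ} (hk : k < n) : Tt n (ordE n) (fE n) k = (0, 1, 2) := by
  have hpar := nxt_parity hn hE hk
  have hnl := nxt_lt (n := n) (k := k) hn
  rcases Nat.eq_zero_or_pos (k % 2) with hev | hodd'
  · have hnxt_odd : ¬ (nxt n k % 2 = 0) := hpar.1 hev
    have h1 : ¬ (ordE n n < ordE n k) := by
      unfold ordE; rw [if_pos rfl, if_neg (by omega), if_pos hev]; omega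
    have h2 : ordE n n < ordE n (nxt n k) := by
      unfold ordE
      rw [if_pos rfl, if_neg (by omega), if_neg hnxt_odd]
      omega
    unfold Tt
    rw [if_neg h1, if_pos h2, avE hn hk, avE hn hnl, bvE hn hk,
      if_pos hev, if_neg hnxt_odd]
  · have hkodd : ¬ (k % 2 = 0) := by omega
    have hnxt_even : nxt n k % 2 = 0 := by
      by_contra hc; exact hkodd (hpar.2 hc)
    have h1 : ordE n n < ordE n k := by
      unfold ordE
      rw [if_pos rfl, if_neg (by omega), if_neg hkodd]
      omega
    have h2 : ¬ (ordE n n < ordE n (nxt n k)) := by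
      unfold ordE; rw [if_pos rfl, if_neg (by omega), if_pos hnxt_even]; omega
    unfold Tt
    rw [if_pos h1, if_neg h2, avE hn hk, avE hn hnl, bvE hn hk,
      if_neg hkodd, if_pos hnxt_even]

omit hn in
lemma orientedE : Oriented {((0 : ℕ), (1 : ℕ), (2 : ℕ))} := by
  intro a b c h
  rw [Set.mem_singleton_iff] at h
  simp only [Prod.mk.injEq] at h
  obtain ⟨rfl, rfl, rfl⟩ := h
  refine ⟨by omega, ?_, ?_, ?_, ?_, ?_⟩ <;> simp [Prod.ext_iff]

lemma homE (hE : n % 2 = 0) :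
    IsPairHom (linkCycle n) (ordE n) {((0 : ℕ), (1 : ℕ), (2 : ℕ))} (fE n) := by
  refine ⟨hinjE, ?_⟩
  intro e he u v w hdec h1 h2
  rw [edges_eq hn] at he
  obtain ⟨k, hk, rfl⟩ := Finset.mem_image.1 he
  have hk' : k < n := Finset.mem_range.1 hk
  have hval := sorted_val (f := fE n) hn hinjE hk' hdec h1 h2
  rw [TtE hn hE hk'] at hval
  obtain ⟨e1, e2, e3⟩ : fE n {u, v} = 0 ∧ fE n {v, w} = 1 ∧ fE n {u, w} = 2 :=
    ⟨congrArg Prod.fst hval, congrArg (fun p => p.2.1) hval,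
      congrArg (fun p => p.2.2) hval⟩
  rw [e1, e2, e3]
  exact ⟨⟨by omega, by omega, by omega⟩, rfl⟩

lemma sSupE (hE : n % 2 = 0) : sSup (ratioSet n (ordE n) (fE n)) = 1 / 3 := by
  have hset := ratioSet_eq (f := fE n) hn (hinjE (n := n))
  have hval : ∀ K : Finset ℕ, K ⊆ Finset.range n → K.Nonempty →
      ((K.image (Tt n (ordE n) (fE n))).card : ℝ) /
      ((K.biUnion (Sv n (ordE n) (fE n))).card : ℝ) = 1 / 3 := by
    intro K hK hne
    have h1 : K.image (Tt n (ordE n) (fE n)) = {((0:ℕ),(1:ℕ),(2:ℕ))} := by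
      rw [Finset.image_congr (g := fun _ => ((0:ℕ),(1:ℕ),(2:ℕ)))
        (fun k hk => TtE hn hE (Finset.mem_range.1 (hK hk)))]
      exact Finset.image_const hne _
    have h2 : K.biUnion (Sv n (ordE n) (fE n)) = {0, 1, 2} := by
      apply Finset.Subset.antisymm
      · intro x hx
        obtain ⟨k, hk, hx⟩ := Finset.mem_biUnion.1 hx
        unfold Sv at hx
        rwa [TtE hn hE (Finset.mem_range.1 (hK hk))] at hx
      · intro x hx
        obtain ⟨k0, hk0⟩ := hne
        refine Finset.mem_biUnion.2 ⟨k0, hk0, ?_⟩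
        unfold Sv
        rwa [TtE hn hE (Finset.mem_range.1 (hK hk0))]
    rw [h1, h2]
    norm_num
  have hne0 : (Finset.range n).Nonempty := ⟨0, Finset.mem_range.2 (by omega)⟩
  have hmem : (1 / 3 : ℝ) ∈ ratioSet n (ordE n) (fE n) := by
    rw [hset]
    exact ⟨Finset.range n, le_refl _, hne0, (hval _ (le_refl _) hne0).symm⟩
  have hub : ∀ r ∈ ratioSet n (ordE n) (fE n), r ≤ 1 / 3 := by
    intro r hr
    rw [hset] at hr
    obtain ⟨K, hK, hne, rfl⟩ := hr
    rw [hval K hK hne]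
  exact le_antisymm (csSup_le ⟨_, hmem⟩ hub) (le_csSup ⟨1 / 3, hub⟩ hmem)

end

end MP
namespace MP

section
variable {n : ℕ} {ord : ℕ → ℕ} {f : Finset ℕ → ℕ}
  (hn : 3 ≤ n) (hinj : Set.InjOn ord ↑(linkCycle n).verts)

lemma Sv_nonempty (k : ℕ) : (Sv n ord f k).Nonempty := ⟨_, Finset.mem_insert_self _ _⟩

lemma vK_pos {K : Finset ℕ} (hne : K.Nonempty) :
    1 ≤ (K.biUnion (Sv n ord f)).card := by
  obtain ⟨k, hk⟩ := hne
  obtain ⟨x, hx⟩ := Sv_nonempty (n := n) (ord := ord) (f := f) k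
  exact Finset.card_pos.2 ⟨x, Finset.mem_biUnion.2 ⟨k, hk, hx⟩⟩

lemma vK_le_three {K : Finset ℕ} :
    (K.biUnion (Sv n ord f)).card ≤ 3 * (K.image (Tt n ord f)).card := by
  have hsub : K.biUnion (Sv n ord f) ⊆
      (K.image (Tt n ord f)).biUnion (fun p => {p.1, p.2.1, p.2.2}) := by
    intro x hx
    obtain ⟨k, hk, hx⟩ := Finset.mem_biUnion.1 hx
    exact Finset.mem_biUnion.2 ⟨Tt n ord f k, Finset.mem_image.2 ⟨k, hk, rfl⟩, hx⟩
  calc (K.biUnion (Sv n ord f)).card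
      ≤ ((K.image (Tt n ord f)).biUnion (fun p => {p.1, p.2.1, p.2.2})).card :=
        Finset.card_le_card hsub
    _ ≤ ∑ p ∈ K.image (Tt n ord f), ({p.1, p.2.1, p.2.2} : Finset ℕ).card :=
        Finset.card_biUnion_le
    _ ≤ ∑ _p ∈ K.image (Tt n ord f), 3 := by
        refine Finset.sum_le_sum fun p _ => ?_
        refine le_trans (Finset.card_insert_le _ _) ?_
        refine Nat.succ_le_succ (le_trans (Finset.card_insert_le _ _) ?_)
        simp
    _ = 3 * (K.image (Tt n ord f)).card := by rw [Finset.sum_const, smul_eq_mul]; ring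

include hn hinj

lemma ratioSet_nonempty : (ratioSet n ord f).Nonempty := by
  rw [ratioSet_eq hn hinj]
  exact ⟨_, Finset.range n, le_refl _, ⟨0, Finset.mem_range.2 (by omega)⟩, rfl⟩

lemma ratioSet_bddAbove : BddAbove (ratioSet n ord f) := by
  refine ⟨(n : ℝ), ?_⟩
  intro r hr
  rw [ratioSet_eq hn hinj] at hr
  obtain ⟨K, hK, hne, rfl⟩ := hr
  have h1 : (K.image (Tt n ord f)).card ≤ n := by
    calc (K.image (Tt n ord f)).card ≤ K.card := Finset.card_image_le
      _ ≤ n := by simpa using Finset.card_le_card hK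
  refine le_trans (ratio_le_self (vK_pos hne)) ?_
  exact_mod_cast h1

lemma sSup_ge_third : 1 / 3 ≤ sSup (ratioSet n ord f) := by
  have hmem : ((((Finset.range n).image (Tt n ord f)).card : ℝ) /
      (((Finset.range n).biUnion (Sv n ord f)).card : ℝ)) ∈ ratioSet n ord f := by
    rw [ratioSet_eq hn hinj]
    exact ⟨Finset.range n, le_refl _, ⟨0, Finset.mem_range.2 (by omega)⟩, rfl⟩
  refine le_trans ?_ (le_csSup (ratioSet_bddAbove hn hinj) hmem)
  exact ratio_ge_third vK_le_three (vK_pos ⟨0, Finset.mem_range.2 (by omega)⟩)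

lemma sSup_ge_half (hex : ∃ r ∈ ratioSet n ord f, 1 / 2 ≤ r) :
    1 / 2 ≤ sSup (ratioSet n ord f) := by
  obtain ⟨r, hr, hhalf⟩ := hex
  exact le_trans hhalf (le_csSup (ratioSet_bddAbove hn hinj) hr)

end

end MP
namespace MP

/-- incidence between vertices and edges of a 3-graph, as a relation on `ℕ ⊕ Finset ℕ` -/
def Incid (S : Set (Finset ℕ)) : (ℕ ⊕ Finset ℕ) → (ℕ ⊕ Finset ℕ) → Prop
  | Sum.inl v, Sum.inr G => G ∈ S ∧ v ∈ G
  | Sum.inr G, Sum.inl v => G ∈ S ∧ v ∈ G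
  | _, _ => False

lemma Incid_isLeft {S : Set (Finset ℕ)} {x y : ℕ ⊕ Finset ℕ} (h : Incid S x y) :
    y.isLeft = !x.isLeft := by
  cases x <;> cases y <;> simp [Incid] at h ⊢

lemma Incid_irrefl {S : Set (Finset ℕ)} {x : ℕ ⊕ Finset ℕ} (h : Incid S x x) : False := by
  have := Incid_isLeft h
  cases x <;> simp at this

/-- traversal indicator of step `k` -/
noncomputable def gfun (w : ℕ → ℕ ⊕ Finset ℕ) (p : (ℕ ⊕ Finset ℕ) × (ℕ ⊕ Finset ℕ))
    (k : ℕ) : ℕ :=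
  if (w k, w (k+1)) = p ∨ (w k, w (k+1)) = (p.2, p.1) then 1 else 0

lemma gfun_congr {w w' : ℕ → ℕ ⊕ Finset ℕ} {p : (ℕ ⊕ Finset ℕ) × (ℕ ⊕ Finset ℕ)}
    {a b : ℕ} (h1 : w a = w' b) (h2 : w (a+1) = w' (b+1)) : gfun w p a = gfun w' p b := by
  unfold gfun
  simp only [h1, h2]

/-- number of traversals of the (unordered) pair `p` by the closed walk `w` -/
noncomputable def cnt (w : ℕ → ℕ ⊕ Finset ℕ) (len : ℕ)
    (p : (ℕ ⊕ Finset ℕ) × (ℕ ⊕ Finset ℕ)) : ℕ :=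
  ∑ k ∈ Finset.range len, gfun w p k

lemma bool_parity (w : ℕ → ℕ ⊕ Finset ℕ) (h0 : (w 0).isLeft = true)
    (hstep : ∀ k, (w (k+1)).isLeft = !(w k).isLeft) :
    ∀ k, ((w k).isLeft = true ↔ Even k) := by
  intro k
  induction k with
  | zero => simp [h0]
  | succ k ih =>
    rw [hstep k, Nat.even_add_one]
    rcases hb : (w k).isLeft with _ | _ <;> simp_all

/-- a closed walk without repetitions in the incidence graph yields a Berge cycle -/
lemma berge_of_cycle {S : Set (Finset ℕ)} {len : ℕ} {w : ℕ → ℕ ⊕ Finset ℕ}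
    (hlen : 3 ≤ len) (hval : ∀ k, k < len → Incid S (w k) (w (k+1)))
    (hclosed : w len = w 0)
    (hinj : ∀ i j, i < len → j < len → w i = w j → i = j) :
    HasBergeCycle S := by
  -- rotate the walk so that it starts at a vertex node
  have hstepw : ∀ k, k < len → (w (k+1)).isLeft = !(w k).isLeft :=
    fun k hk => Incid_isLeft (hval k hk)
  set d : ℕ := if (w 0).isLeft = true then 0 else 1 with hd
  have hdle : d ≤ 1 := by rw [hd]; split_ifs <;> omega
  set wr : ℕ → ℕ ⊕ Finset ℕ := fun k => w ((k + d) % len) with hwr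
  have hmodlt : ∀ m : ℕ, m % len < len := fun m => Nat.mod_lt _ (by omega)
  have hvalr : ∀ k, Incid S (wr k) (wr (k+1)) := by
    intro k
    have h1 : (k + 1 + d) % len = ((k + d) % len + 1) % len := by
      rw [show k + 1 + d = (k + d) + 1 by ring, Nat.add_mod (k+d) 1 len,
        Nat.mod_eq_of_lt (show 1 < len by omega)]
    rw [hwr]
    simp only []
    rw [h1]
    set r := (k + d) % len with hr
    have hrlt : r < len := hmodlt _
    rcases Nat.lt_or_ge (r + 1) len with h2 | h2
    · rw [Nat.mod_eq_of_lt h2]; exact hval r hrlt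
    · have : r + 1 = len := by omega
      rw [this, Nat.mod_self, ← hclosed]
      exact this ▸ hval r hrlt
  have hclosedr : wr len = wr 0 := by
    show w ((len + d) % len) = w ((0 + d) % len)
    congr 1
    rw [Nat.add_comm, Nat.add_mod_right, Nat.zero_add]
  have hinjr : ∀ i j, i < len → j < len → wr i = wr j → i = j := by
    intro i j hi hj h
    have h' := hinj _ _ (hmodlt (i + d)) (hmodlt (j + d)) h
    have hmod : ∀ x : ℕ, x < 2 * len → x % len = if x < len then x else x - len := by
      intro x hx
      split_ifs with hxl
      · exact Nat.mod_eq_of_lt hxl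
      · rw [Nat.mod_eq_sub_mod (by omega), Nat.mod_eq_of_lt (by omega)]
    rw [hmod _ (by omega), hmod _ (by omega)] at h'
    split_ifs at h' <;> omega
  have h0r : (wr 0).isLeft = true := by
    show (w ((0 + d) % len)).isLeft = true
    rw [Nat.zero_add, Nat.mod_eq_of_lt (by omega : d < len), hd]
    rcases hww : (w 0).isLeft with _ | _
    · rw [if_neg (by simp), hstepw 0 (by omega), hww]
      rfl
    · rw [if_pos rfl]
      exact hww
  have hpar : ∀ k, ((wr k).isLeft = true ↔ Even k) :=
    bool_parity wr h0r (fun k => Incid_isLeft (hvalr k))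
  have hlene : Even len := by
    rw [← hpar len]
    rw [hclosedr]
    exact (hpar 0).2 (by simp)
  obtain ⟨t, ht⟩ := hlene
  have htlen : len = 2 * t := by omega
  have ht2 : 2 ≤ t := by omega
  haveI : NeZero t := ⟨by omega⟩
  have hvallt : ∀ i : ZMod t, 2 * i.val + 1 < len := by
    intro i
    have := ZMod.val_lt i
    omega
  have hinl : ∀ i : ZMod t, ∃ x : ℕ, wr (2 * i.val) = Sum.inl x := by
    intro i
    have he : Even (2 * i.val) := ⟨i.val, by ring⟩
    have := (hpar (2 * i.val)).2 he
    rcases hx : wr (2 * i.val) with x | G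
    · exact ⟨x, rfl⟩
    · exfalso
      have h3 : (Sum.inr G : ℕ ⊕ Finset ℕ).isLeft = true := by rw [← hx]; exact this
      simp at h3
  have hinr : ∀ i : ZMod t, ∃ G : Finset ℕ, wr (2 * i.val + 1) = Sum.inr G := by
    intro i
    have he : ¬ Even (2 * i.val + 1) := by
      simp [Nat.even_add_one, parity_simps]
    have h2 := hpar (2 * i.val + 1)
    rcases hx : wr (2 * i.val + 1) with x | G
    · exfalso
      refine he ((hpar _).1 ?_)
      rw [hx]
      rfl
    · exact ⟨G, rfl⟩
  choose xf hxf using hinl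
  choose Gf hGf using hinr
  have hx_inj : Function.Injective xf := by
    intro i j h
    have : wr (2 * i.val) = wr (2 * j.val) := by rw [hxf i, hxf j, h]
    have := hinjr _ _ (by have := hvallt i; omega) (by have := hvallt j; omega) this
    have hv : i.val = j.val := by omega
    exact ZMod.val_injective t hv
  have hG_inj : Function.Injective Gf := by
    intro i j h
    have : wr (2 * i.val + 1) = wr (2 * j.val + 1) := by rw [hGf i, hGf j, h]
    have := hinjr _ _ (hvallt i) (hvallt j) this
    have hv : i.val = j.val := by omega
    exact ZMod.val_injective t hv
  have hstep1 : ∀ i : ZMod t, Gf i ∈ S ∧ xf i ∈ Gf i := by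
    intro i
    have h := hvalr (2 * i.val)
    rw [hxf i, hGf i] at h
    exact h
  have hsucc : ∀ i : ZMod t, (i + 1).val = (i.val + 1) % t := by
    intro i
    haveI : Fact (1 < t) := ⟨by omega⟩
    rw [ZMod.val_add, ZMod.val_one]
  have hstep2 : ∀ i : ZMod t, xf (i + 1) ∈ Gf i := by
    intro i
    have h := hvalr (2 * i.val + 1)
    rw [hGf i] at h
    have hkey : wr (2 * (i + 1).val) = wr (2 * i.val + 1 + 1) := by
      rw [hsucc i]
      rcases Nat.lt_or_ge (i.val + 1) t with hc | hc
      · rw [Nat.mod_eq_of_lt hc]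
        exact congrArg wr (by omega)
      · have hv : i.val = t - 1 := by have := ZMod.val_lt i; omega
        have h1 : (i.val + 1) % t = 0 := by
          rw [show i.val + 1 = t by omega]
          exact Nat.mod_self t
        have h2 : 2 * i.val + 1 + 1 = len := by omega
        rw [h1, h2]
        simpa using hclosedr.symm
    rw [← hkey, hxf (i + 1)] at h
    exact h.2
  refine ⟨t, ht2, xf, Gf, hx_inj, hG_inj, fun i => ⟨(hstep1 i).1, (hstep1 i).2, hstep2 i⟩⟩

end MP
namespace MP

lemma walk_parity {S : Set (Finset ℕ)} (hnb : ¬ HasBergeCycle S) :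
    ∀ len : ℕ, ∀ w : ℕ → ℕ ⊕ Finset ℕ, 1 ≤ len →
      (∀ k, k < len → Incid S (w k) (w (k+1))) → w len = w 0 →
      ∀ p : (ℕ ⊕ Finset ℕ) × (ℕ ⊕ Finset ℕ), Even (cnt w len p) := by
  intro len
  induction len using Nat.strong_induction_on with
  | _ len IH =>
  intro w hlen hval hclosed p
  by_cases hrep : ∃ i j, i < j ∧ j ≤ len ∧ ¬(i = 0 ∧ j = len) ∧ w i = w j
  · obtain ⟨i, j, hij, hjlen, hnotfull, hwij⟩ := hrep
    set len1 := j - i with hlen1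
    set len2 := len - (j - i) with hlen2
    have hlen1pos : 1 ≤ len1 := by omega
    have hlen2pos : 1 ≤ len2 := by
      rcases Nat.eq_zero_or_pos i with hi0 | hipos
      · have : j ≠ len := fun hjl => hnotfull ⟨hi0, hjl⟩
        omega
      · omega
    have hlen1lt : len1 < len := by omega
    have hlen2lt : len2 < len := by omega
    set w1 : ℕ → ℕ ⊕ Finset ℕ := fun k => w (i + k) with hw1
    set w2 : ℕ → ℕ ⊕ Finset ℕ := fun k => if k < i then w k else w (k + (j - i)) with hw2
    have hw2lt : ∀ k, k < i → w2 k = w k := by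
      intro k hk
      show (if k < i then w k else _) = w k
      rw [if_pos hk]
    have hw2ge : ∀ k, i ≤ k → w2 k = w (k + (j - i)) := by
      intro k hk
      show (if k < i then _ else w (k + (j - i))) = w (k + (j - i))
      rw [if_neg (by omega)]
    have hval1 : ∀ k, k < len1 → Incid S (w1 k) (w1 (k+1)) := by
      intro k hk
      have h := hval (i + k) (by omega)
      have e : w1 (k + 1) = w (i + k + 1) := by
        show w (i + (k + 1)) = _
        rw [show i + (k+1) = i + k + 1 by omega]
      rw [show w1 k = w (i + k) from rfl, e]
      exact h
    have hclosed1 : w1 len1 = w1 0 := by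
      show w (i + (j - i)) = w (i + 0)
      rw [show i + (j - i) = j by omega, show i + 0 = i by omega]
      exact hwij.symm
    have hval2 : ∀ k, k < len2 → Incid S (w2 k) (w2 (k+1)) := by
      intro k hk
      rcases Nat.lt_or_ge (k+1) i with h1 | h1
      · rw [hw2lt k (by omega), hw2lt (k+1) h1]
        exact hval k (by omega)
      · rcases Nat.lt_or_ge k i with h2 | h2
        · have hki : k + 1 = i := by omega
          rw [hw2lt k h2, hw2ge (k+1) h1]
          rw [show k + 1 + (j - i) = j by omega, ← hwij, ← hki]
          exact hval k (by omega)
        · rw [hw2ge k h2, hw2ge (k+1) (by omega)]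
          rw [show k + 1 + (j - i) = k + (j - i) + 1 by omega]
          exact hval (k + (j - i)) (by omega)
    have hclosed2 : w2 len2 = w2 0 := by
      rw [hw2ge len2 (by omega)]
      rw [show len2 + (j - i) = len by omega, hclosed]
      rcases Nat.eq_zero_or_pos i with hi0 | hipos
      · rw [hw2ge 0 (by omega)]
        rw [show 0 + (j - i) = j by omega, ← hwij, hi0]
      · rw [hw2lt 0 hipos]
    have hcnt1 : cnt w1 len1 p = ∑ k ∈ Finset.Ico i j, gfun w p k := by
      unfold cnt
      rw [Finset.sum_Ico_eq_sum_range]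
      apply Finset.sum_congr (by rw [hlen1])
      intro k hk
      refine gfun_congr rfl ?_
      show w (i + (k + 1)) = w (i + k + 1)
      rw [show i + (k+1) = i + k + 1 by omega]
    have hcnt2 : cnt w2 len2 p =
        (∑ k ∈ Finset.Ico 0 i, gfun w p k) + ∑ k ∈ Finset.Ico j len, gfun w p k := by
      unfold cnt
      rw [Finset.range_eq_Ico,
        ← Finset.sum_Ico_consecutive _ (Nat.zero_le i) (by omega : i ≤ len2)]
      congr 1
      · apply Finset.sum_congr rfl
        intro k hk
        rw [Finset.mem_Ico] at hk
        refine gfun_congr (hw2lt k hk.2) ?_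
        rcases Nat.lt_or_ge (k+1) i with h1 | h1
        · exact hw2lt (k+1) h1
        · rw [hw2ge (k+1) h1]
          rw [show k + 1 + (j - i) = j by omega, ← hwij, show i = k + 1 by omega]
      · rw [Finset.sum_Ico_eq_sum_range, Finset.sum_Ico_eq_sum_range]
        rw [show len2 - i = len - j by omega]
        apply Finset.sum_congr rfl
        intro k hk
        refine gfun_congr ?_ ?_
        · rw [hw2ge (i + k) (by omega)]
          rw [show i + k + (j - i) = j + k by omega]
        · rw [hw2ge (i + k + 1) (by omega)]
          rw [show i + k + 1 + (j - i) = j + k + 1 by omega]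
    have htotal : cnt w len p = cnt w1 len1 p + cnt w2 len2 p := by
      rw [hcnt1, hcnt2]
      unfold cnt
      rw [Finset.range_eq_Ico,
        ← Finset.sum_Ico_consecutive (gfun w p) (Nat.zero_le j) (hjlen : j ≤ len),
        ← Finset.sum_Ico_consecutive (gfun w p) (Nat.zero_le i) (by omega : i ≤ j)]
      ring
    rw [htotal]
    exact Even.add (IH len1 hlen1lt w1 hlen1pos hval1 hclosed1 p)
      (IH len2 hlen2lt w2 hlen2pos hval2 hclosed2 p)
  · push_neg at hrep
    have hinj : ∀ a b, a < len → b < len → w a = w b → a = b := by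
      intro a b ha hb hab
      by_contra hne
      rcases Nat.lt_or_ge a b with h | h
      · exact hrep a b h (by omega) (fun _ => by omega) hab
      · exact hrep b a (by omega) (by omega) (fun _ => by omega) hab.symm
    rcases Nat.lt_or_ge len 3 with hsmall | hbig
    · rcases Nat.lt_or_ge len 2 with h1 | h2
      · exfalso
        have := hval 0 (by omega)
        rw [show (0:ℕ) + 1 = len by omega, hclosed] at this
        exact Incid_irrefl this
      · have he2 : len = 2 := by omega
        subst he2
        have hq : gfun w p 1 = gfun w p 0 := by
          unfold gfun
          have hiff : ((w 1, w (1+1)) = p ∨ (w 1, w (1+1)) = (p.2, p.1)) ↔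
              ((w 0, w (0+1)) = p ∨ (w 0, w (0+1)) = (p.2, p.1)) := by
            rw [show (1:ℕ)+1 = 2 from rfl, hclosed]
            obtain ⟨p1, p2⟩ := p
            simp only [Prod.mk.injEq]
            tauto
          exact if_congr hiff rfl rfl
        unfold cnt
        rw [Finset.sum_range_succ, Finset.sum_range_succ, Finset.sum_range_zero, hq]
        exact ⟨gfun w p 0, by omega⟩
    · exact absurd (berge_of_cycle hbig hval hclosed hinj) hnb

end MP
namespace MP

lemma even_sum_nat {s : Finset ℕ} {f : ℕ → ℕ} (h : ∀ i ∈ s, Even (f i)) :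
    Even (∑ i ∈ s, f i) := by
  classical
  induction s using Finset.induction_on with
  | empty => simp
  | insert _ _ hx ih =>
    rw [Finset.sum_insert hx]
    exact Even.add (h _ (Finset.mem_insert_self _ _))
      (ih (fun i hi => h i (Finset.mem_insert_of_mem hi)))

lemma even_sum_pairs {s : Finset (ℕ × Finset ℕ)} {f : ℕ × Finset ℕ → ℕ}
    (h : ∀ i ∈ s, Even (f i)) : Even (∑ i ∈ s, f i) := by
  classical
  induction s using Finset.induction_on with
  | empty => simp
  | insert _ _ hx ih =>
    rw [Finset.sum_insert hx]
    exact Even.add (h _ (Finset.mem_insert_self _ _))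
      (ih (fun i hi => h i (Finset.mem_insert_of_mem hi)))

/-- fiberwise parity: if the "role" `r` is constant on fibers of the "key" `g`, and every
key-fiber has even size, then every role-fiber has even size. -/
lemma fiber_even (s : Finset ℕ) (g : ℕ → ℕ × Finset ℕ) (r : ℕ → ℕ)
    (h1 : ∀ a ∈ s, ∀ b ∈ s, g a = g b → r a = r b)
    (h2 : ∀ p : ℕ × Finset ℕ, Even ((s.filter (fun a => g a = p)).card)) (j : ℕ) :
    Even ((s.filter (fun a => r a = j)).card) := by
  classical
  have hdecomp : (s.filter (fun a => r a = j)).card =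
      ∑ p ∈ s.image g, ((s.filter (fun a => r a = j)).filter (fun a => g a = p)).card := by
    apply Finset.card_eq_sum_card_fiberwise
    intro a ha
    exact Finset.mem_image_of_mem g (Finset.mem_filter.1 ha).1
  rw [hdecomp]
  apply even_sum_pairs
  intro p hp
  by_cases hex : ∃ a ∈ s, g a = p ∧ r a = j
  · obtain ⟨a0, ha0, hga0, hra0⟩ := hex
    have : (s.filter (fun a => r a = j)).filter (fun a => g a = p) =
        s.filter (fun a => g a = p) := by
      ext a
      simp only [Finset.mem_filter]
      constructor
      · rintro ⟨⟨ha, -⟩, hg⟩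
        exact ⟨ha, hg⟩
      · rintro ⟨ha, hg⟩
        exact ⟨⟨ha, by rw [h1 a ha a0 ha0 (hg.trans hga0.symm), hra0]⟩, hg⟩
    rw [this]
    exact h2 p
  · have : (s.filter (fun a => r a = j)).filter (fun a => g a = p) = ∅ := by
      rw [Finset.filter_eq_empty_iff]
      intro a ha
      rw [Finset.mem_filter] at ha
      exact fun hg => hex ⟨a, ha.1, hg, ha.2⟩
    rw [this]
    simp

end MP
namespace MP

lemma sum_range_double {m : ℕ} (h : ℕ → ℕ) :
    ∑ k ∈ Finset.range (2 * m), h k =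
      ∑ j ∈ Finset.range m, (h (2 * j) + h (2 * j + 1)) := by
  induction m with
  | zero => simp
  | succ m ih =>
    rw [show 2 * (m + 1) = 2 * m + 1 + 1 by ring, Finset.sum_range_succ,
      Finset.sum_range_succ, Finset.sum_range_succ, ih]
    omega

lemma sum_range_twoblock {m : ℕ} (h : ℕ → ℕ) :
    ∑ k ∈ Finset.range (2 * m), h k =
      (∑ j ∈ Finset.range m, h j) + ∑ j ∈ Finset.range m, h (m + j) := by
  rw [Finset.range_eq_Ico,
    ← Finset.sum_Ico_consecutive h (Nat.zero_le m) (by omega : m ≤ 2 * m)]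
  congr 1
  · rw [Finset.sum_Ico_eq_sum_range]; simp
  rw [Finset.sum_Ico_eq_sum_range]
  apply Finset.sum_congr (by rw [show 2 * m - m = m by omega, Finset.range_eq_Ico])
  intros; rfl

section
variable {n : ℕ} {ord : ℕ → ℕ} {f : Finset ℕ → ℕ}

/-- the set of image triples (as vertex sets) -/
def Simg (n : ℕ) (ord : ℕ → ℕ) (f : Finset ℕ → ℕ) : Set (Finset ℕ) :=
  {G | ∃ k, k < n ∧ Sv n ord f k = G}

/-- the closed walk in the incidence graph of the image -/
noncomputable def wlk (n : ℕ) (ord : ℕ → ℕ) (f : Finset ℕ → ℕ) (k : ℕ) : ℕ ⊕ Finset ℕ :=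
  if k % 2 = 0 then Sum.inl (av n f (k / 2 % n)) else Sum.inr (Sv n ord f (k / 2 % n))

variable (hn : 3 ≤ n)
include hn

lemma wlk_even {j : ℕ} (hj : j < n) : wlk n ord f (2 * j) = Sum.inl (av n f j) := by
  unfold wlk
  rw [if_pos (by omega)]
  congr 1
  rw [Nat.mul_div_cancel_left j (by omega : 0 < 2), Nat.mod_eq_of_lt hj]

lemma wlk_odd {j : ℕ} (hj : j < n) : wlk n ord f (2 * j + 1) = Sum.inr (Sv n ord f j) := by
  unfold wlk
  rw [if_neg (by omega)]
  congr 1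
  rw [show (2 * j + 1) / 2 = j by omega, Nat.mod_eq_of_lt hj]

lemma wlk_valid : ∀ k, k < 2 * n → Incid (Simg n ord f) (wlk n ord f k) (wlk n ord f (k+1)) := by
  intro k hk
  rcases Nat.even_or_odd k with ⟨j, hj⟩ | ⟨j, hj⟩
  · have hjn : j < n := by omega
    rw [show k = 2 * j by omega, show 2 * j + 1 = 2 * j + 1 from rfl,
      wlk_even hn hjn, wlk_odd hn hjn]
    show Sv n ord f j ∈ Simg n ord f ∧ av n f j ∈ Sv n ord f j
    refine ⟨⟨j, hjn, rfl⟩, ?_⟩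
    rw [Sv_eq0]
    simp
  · have hjn : j < n := by omega
    rw [show k = 2 * j + 1 by omega]
    rw [wlk_odd hn hjn]
    rcases Nat.lt_or_ge (j + 1) n with hc | hc
    · rw [show 2 * j + 1 + 1 = 2 * (j + 1) by ring, wlk_even hn hc]
      show Sv n ord f j ∈ Simg n ord f ∧ av n f (j + 1) ∈ Sv n ord f j
      refine ⟨⟨j, hjn, rfl⟩, ?_⟩
      have : nxt n j = j + 1 := by
        unfold nxt
        rw [Nat.mod_eq_of_lt hc]
      rw [Sv_eq0, ← this]
      simp
    · have hjn1 : j + 1 = n := by omega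
      rw [show 2 * j + 1 + 1 = 2 * (j + 1) by ring, hjn1]
      have h0 : wlk n ord f (2 * n) = Sum.inl (av n f 0) := by
        unfold wlk
        rw [if_pos (by omega)]
        congr 1
        rw [Nat.mul_div_cancel_left n (by omega : 0 < 2), Nat.mod_self]
      rw [h0]
      show Sv n ord f j ∈ Simg n ord f ∧ av n f 0 ∈ Sv n ord f j
      refine ⟨⟨j, hjn, rfl⟩, ?_⟩
      have : nxt n j = 0 := by
        unfold nxt
        rw [hjn1, Nat.mod_self]
      rw [Sv_eq0, ← this]
      simp

lemma wlk_closed : wlk n ord f (2 * n) = wlk n ord f 0 := by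
  unfold wlk
  rw [if_pos (by omega), if_pos (by omega)]
  congr 2
  rw [Nat.mul_div_cancel_left n (by omega : 0 < 2), Nat.mod_self]
  rfl

lemma AB_even (hnb : ¬ HasBergeCycle (Simg n ord f)) (v : ℕ) (G : Finset ℕ) :
    Even (((Finset.range n).filter (fun k => av n f k = v ∧ Sv n ord f k = G)).card
      + ((Finset.range n).filter (fun k => av n f (nxt n k) = v ∧ Sv n ord f k = G)).card) := by
  have hpar := walk_parity hnb (2 * n) (wlk n ord f) (by omega) (wlk_valid hn)
    (wlk_closed hn) (Sum.inl v, Sum.inr G)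
  have hsplit : cnt (wlk n ord f) (2 * n) (Sum.inl v, Sum.inr G) =
      (∑ j ∈ Finset.range n, (if av n f j = v ∧ Sv n ord f j = G then 1 else 0))
      + ∑ j ∈ Finset.range n, (if av n f (nxt n j) = v ∧ Sv n ord f j = G then 1 else 0) := by
    unfold cnt
    rw [sum_range_double]
    rw [← Finset.sum_add_distrib]
    apply Finset.sum_congr rfl
    intro j hj
    have hjn : j < n := Finset.mem_range.1 hj
    congr 1
    · -- even step
      unfold gfun
      rw [wlk_even hn hjn, wlk_odd hn hjn]
      apply if_congr _ rfl rfl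
      simp only [Prod.mk.injEq, Sum.inl.injEq, Sum.inr.injEq]
      constructor
      · rintro (⟨h1, h2⟩ | ⟨h1, h2⟩)
        · exact ⟨h1, h2⟩
        · cases h1
      · intro ⟨h1, h2⟩
        exact Or.inl ⟨h1, h2⟩
    · -- odd step
      unfold gfun
      rw [wlk_odd hn hjn]
      have hstep : wlk n ord f (2 * j + 1 + 1) = Sum.inl (av n f (nxt n j)) := by
        rcases Nat.lt_or_ge (j + 1) n with hc | hc
        · rw [show 2 * j + 1 + 1 = 2 * (j + 1) by ring, wlk_even hn hc]
          congr 1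
          unfold nxt
          rw [Nat.mod_eq_of_lt hc]
        · have hjn1 : j + 1 = n := by omega
          rw [show 2 * j + 1 + 1 = 2 * (j + 1) by ring, hjn1]
          unfold wlk
          rw [if_pos (by omega)]
          have e1 : 2 * n / 2 % n = 0 := by
            rw [Nat.mul_div_cancel_left n (by omega : 0 < 2), Nat.mod_self]
          rw [e1]
          congr 1
          unfold nxt
          rw [hjn1, Nat.mod_self]
      rw [hstep]
      apply if_congr _ rfl rfl
      simp only [Prod.mk.injEq, Sum.inl.injEq, Sum.inr.injEq]
      constructor
      · rintro (⟨h1, h2⟩ | ⟨h1, h2⟩)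
        · cases h1
        · exact ⟨h2, h1⟩
      · intro ⟨h1, h2⟩
        exact Or.inr ⟨h2, h1⟩
  rw [hsplit] at hpar
  rwa [Finset.card_filter, Finset.card_filter]

end

end MP
namespace MP

/-- the position (role) of a value in an ordered triple -/
def pos (v : ℕ) (t : ℕ × ℕ × ℕ) : ℕ :=
  if v = t.1 then 1 else if v = t.2.1 then 2 else 3

section
variable {n : ℕ} {ord : ℕ → ℕ} {E : Set (ℕ × ℕ × ℕ)} {f : Finset ℕ → ℕ}
  (hn : 3 ≤ n) (hHom : IsPairHom (linkCycle n) ord E f)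
include hn hHom

lemma role_spec {k : ℕ} (hk : k < n) :
    ((if pos (av n f k) (Tt n ord f k) = 1 then 1 else 0)
      + (if pos (av n f (nxt n k)) (Tt n ord f k) = 1 then 1 else 0))
      + (if ¬(ord n < ord k) ∧ ¬(ord n < ord (nxt n k)) then 1 else 0) = 1
  ∧ ((if pos (av n f k) (Tt n ord f k) = 2 then 1 else 0)
      + (if pos (av n f (nxt n k)) (Tt n ord f k) = 2 then 1 else 0))
      + (if (ord n < ord k) ∧ (ord n < ord (nxt n k)) then 1 else 0) = 1 := by
  obtain ⟨-, d1, d2, d3⟩ := Tt_spec hn hHom hk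
  by_cases h1 : ord n < ord k <;> by_cases h2 : ord n < ord (nxt n k)
  · by_cases h3 : ord k < ord (nxt n k)
    · unfold Tt at d1 d2 d3 ⊢
      rw [if_pos h1, if_pos h2, if_pos h3] at d1 d2 d3 ⊢
      simp only at d1 d2 d3
      constructor <;>
        simp [pos, d1, d2, d3, Ne.symm d1, Ne.symm d2, Ne.symm d3, h1, h2]
    · unfold Tt at d1 d2 d3 ⊢
      rw [if_pos h1, if_pos h2, if_neg h3] at d1 d2 d3 ⊢
      simp only at d1 d2 d3
      constructor <;>
        simp [pos, d1, d2, d3, Ne.symm d1, Ne.symm d2, Ne.symm d3, h1, h2]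
  · unfold Tt at d1 d2 d3 ⊢
    rw [if_pos h1, if_neg h2] at d1 d2 d3 ⊢
    simp only at d1 d2 d3
    constructor <;>
      simp [pos, d1, d2, d3, Ne.symm d1, Ne.symm d2, Ne.symm d3, h1, h2]
  · unfold Tt at d1 d2 d3 ⊢
    rw [if_neg h1, if_pos h2] at d1 d2 d3 ⊢
    simp only at d1 d2 d3
    constructor <;>
      simp [pos, d1, d2, d3, Ne.symm d1, Ne.symm d2, Ne.symm d3, h1, h2]
  · by_cases h3 : ord k < ord (nxt n k)
    · unfold Tt at d1 d2 d3 ⊢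
      rw [if_neg h1, if_neg h2, if_pos h3] at d1 d2 d3 ⊢
      simp only at d1 d2 d3
      constructor <;>
        simp [pos, d1, d2, d3, Ne.symm d1, Ne.symm d2, Ne.symm d3, h1, h2]
    · unfold Tt at d1 d2 d3 ⊢
      rw [if_neg h1, if_neg h2, if_neg h3] at d1 d2 d3 ⊢
      simp only at d1 d2 d3
      constructor <;>
        simp [pos, d1, d2, d3, Ne.symm d1, Ne.symm d2, Ne.symm d3, h1, h2]

lemma mixone {k : ℕ} (hk : k < n) :
    (if ((ord n < ord k) ∧ ¬(ord n < ord (nxt n k))) ∨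
        (¬(ord n < ord k) ∧ (ord n < ord (nxt n k))) then (1:ℕ) else 0)
      + (if ¬(ord n < ord k) ∧ ¬(ord n < ord (nxt n k)) then 1 else 0)
      + (if (ord n < ord k) ∧ (ord n < ord (nxt n k)) then 1 else 0) = 1 := by
  by_cases h1 : ord n < ord k <;> by_cases h2 : ord n < ord (nxt n k) <;>
    simp [h1, h2]

end

end MP
namespace MP

/-- parity of the number of sign changes around a closed cycle -/
lemma changes_even (gb : ℕ → Bool) (m : ℕ) (hcl : gb m = gb 0) :
    Even (∑ j ∈ Finset.range m, (if gb j ≠ gb (j+1) then (1:ℕ) else 0)) := by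
  have key : ∀ m' : ℕ, (∑ j ∈ Finset.range m', (if gb j ≠ gb (j+1) then (1:ℕ) else 0)) % 2
      = (if gb 0 = gb m' then 0 else 1) := by
    intro m'
    induction m' with
    | zero => simp
    | succ m' ih =>
      rw [Finset.sum_range_succ, Nat.add_mod, ih]
      rcases hb0 : gb 0 <;> rcases hb1 : gb m' <;> rcases hb2 : gb (m'+1) <;>
        simp [hb0, hb1, hb2]
  rw [Nat.even_iff, key m, hcl]
  simp

section
variable {n : ℕ} {ord : ℕ → ℕ} {E : Set (ℕ × ℕ × ℕ)} {f : Finset ℕ → ℕ}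
  (hn : 3 ≤ n) (hOr : Oriented E) (hHom : IsPairHom (linkCycle n) ord E f)

include hn hHom

omit hHom in
lemma mix_even :
    Even (∑ k ∈ Finset.range n, (if ((ord n < ord k) ∧ ¬(ord n < ord (nxt n k))) ∨
        (¬(ord n < ord k) ∧ (ord n < ord (nxt n k))) then (1:ℕ) else 0)) := by
  set gb : ℕ → Bool := fun j => decide (ord n < ord (j % n)) with hgb
  have hcl : gb n = gb 0 := by
    rw [hgb]
    simp only []
    rw [Nat.mod_self, Nat.zero_mod]
  have := changes_even gb n hcl
  have hcong : ∀ k ∈ Finset.range n,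
      (if gb k ≠ gb (k+1) then (1:ℕ) else 0) =
      (if ((ord n < ord k) ∧ ¬(ord n < ord (nxt n k))) ∨
        (¬(ord n < ord k) ∧ (ord n < ord (nxt n k))) then (1:ℕ) else 0) := by
    intro k hk
    have hkn : k < n := Finset.mem_range.1 hk
    apply if_congr _ rfl rfl
    rw [hgb]
    simp only []
    rw [Nat.mod_eq_of_lt hkn]
    show ¬(decide (ord n < ord k) = decide (ord n < ord ((k+1) % n))) ↔ _
    rcases hd1 : decide (ord n < ord k) <;>
      rcases hd2 : decide (ord n < ord ((k+1) % n)) <;>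
      simp only [decide_eq_true_eq, decide_eq_false_iff_not] at hd1 hd2 <;>
      simp [nxt, hd1, hd2]
  rwa [Finset.sum_congr rfl hcong] at this

include hOr in
lemma parity_contradiction (hodd : ¬ (n % 2 = 0))
    (hnb : ¬ HasBergeCycle (Simg n ord f)) : False := by
  classical
  -- fiberwise setup on range (2*n)
  set vxt : ℕ → ℕ := fun k => if k < n then av n f k else av n f (nxt n (k - n)) with hvxt
  set idx : ℕ → ℕ := fun k => if k < n then k else k - n with hidx
  set g : ℕ → ℕ × Finset ℕ := fun k => (vxt k, Sv n ord f (idx k)) with hgdef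
  set r : ℕ → ℕ := fun k => pos (vxt k) (Tt n ord f (idx k)) with hrdef
  have hidxlt : ∀ k, k < 2 * n → idx k < n := by
    intro k hk
    rw [hidx]
    simp only []
    split_ifs <;> omega
  have hfib1 : ∀ a ∈ Finset.range (2*n), ∀ b ∈ Finset.range (2*n), g a = g b → r a = r b := by
    intro a ha b hb hg
    rw [hgdef] at hg
    simp only [Prod.mk.injEq] at hg
    rw [hrdef]
    simp only []
    rw [hg.1, Tt_eq_of_Sv_eq hn hOr hHom (hidxlt a (Finset.mem_range.1 ha))
      (hidxlt b (Finset.mem_range.1 hb)) hg.2]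
  have hsplitcard : ∀ q : ℕ → ℕ × Finset ℕ → Prop, ∀ _ : ∀ k p, Decidable (q k p), True := fun _ _ => trivial
  have hfib2 : ∀ p : ℕ × Finset ℕ,
      Even (((Finset.range (2*n)).filter (fun a => g a = p)).card) := by
    rintro ⟨v, G⟩
    rw [Finset.card_filter, sum_range_twoblock]
    have e1 : ∀ j ∈ Finset.range n, (if g j = (v, G) then (1:ℕ) else 0) =
        (if av n f j = v ∧ Sv n ord f j = G then 1 else 0) := by
      intro j hj
      have hjn : j < n := Finset.mem_range.1 hj
      apply if_congr _ rfl rfl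
      rw [hgdef]
      simp only [Prod.mk.injEq]
      rw [hvxt, hidx]
      simp only []
      rw [if_pos hjn, if_pos hjn]
    have e2 : ∀ j ∈ Finset.range n, (if g (n + j) = (v, G) then (1:ℕ) else 0) =
        (if av n f (nxt n j) = v ∧ Sv n ord f j = G then 1 else 0) := by
      intro j hj
      apply if_congr _ rfl rfl
      rw [hgdef]
      simp only [Prod.mk.injEq]
      rw [hvxt, hidx]
      simp only []
      rw [if_neg (by omega), if_neg (by omega), show n + j - n = j by omega]
    rw [Finset.sum_congr rfl e1, Finset.sum_congr rfl e2]
    have := AB_even hn hnb v G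
    rwa [Finset.card_filter, Finset.card_filter] at this
  have hroleeven : ∀ j : ℕ,
      Even (((Finset.range (2*n)).filter (fun a => r a = j)).card) :=
    fiber_even (Finset.range (2*n)) g r hfib1 hfib2
  -- split the role counts
  have hrolesplit : ∀ j : ℕ,
      ((Finset.range (2*n)).filter (fun a => r a = j)).card =
      (∑ k ∈ Finset.range n, (if pos (av n f k) (Tt n ord f k) = j then (1:ℕ) else 0))
      + ∑ k ∈ Finset.range n, (if pos (av n f (nxt n k)) (Tt n ord f k) = j then (1:ℕ) else 0) := by
    intro j
    rw [Finset.card_filter, sum_range_twoblock]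
    congr 1
    · apply Finset.sum_congr rfl
      intro k hk
      have hkn : k < n := Finset.mem_range.1 hk
      apply if_congr _ rfl rfl
      rw [hrdef, hvxt, hidx]
      simp only []
      rw [if_pos hkn, if_pos hkn]
    · apply Finset.sum_congr rfl
      intro k hk
      have hkn : k < n := Finset.mem_range.1 hk
      apply if_congr _ rfl rfl
      rw [hrdef, hvxt, hidx]
      simp only []
      rw [if_neg (by omega), if_neg (by omega), show n + k - n = k by omega]
  -- identities from role_spec
  have hid1 : (∑ k ∈ Finset.range n, (if pos (av n f k) (Tt n ord f k) = 1 then (1:ℕ) else 0))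
      + (∑ k ∈ Finset.range n, (if pos (av n f (nxt n k)) (Tt n ord f k) = 1 then (1:ℕ) else 0))
      + (∑ k ∈ Finset.range n, (if ¬(ord n < ord k) ∧ ¬(ord n < ord (nxt n k))
          then (1:ℕ) else 0)) = n := by
    rw [← Finset.sum_add_distrib, ← Finset.sum_add_distrib]
    rw [Finset.sum_congr rfl (fun k hk => (role_spec hn hHom (Finset.mem_range.1 hk)).1)]
    simp
  have hid2 : (∑ k ∈ Finset.range n, (if pos (av n f k) (Tt n ord f k) = 2 then (1:ℕ) else 0))
      + (∑ k ∈ Finset.range n, (if pos (av n f (nxt n k)) (Tt n ord f k) = 2 then (1:ℕ) else 0))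
      + (∑ k ∈ Finset.range n, (if (ord n < ord k) ∧ (ord n < ord (nxt n k))
          then (1:ℕ) else 0)) = n := by
    rw [← Finset.sum_add_distrib, ← Finset.sum_add_distrib]
    rw [Finset.sum_congr rfl (fun k hk => (role_spec hn hHom (Finset.mem_range.1 hk)).2)]
    simp
  have hid3 : (∑ k ∈ Finset.range n, (if ((ord n < ord k) ∧ ¬(ord n < ord (nxt n k))) ∨
        (¬(ord n < ord k) ∧ (ord n < ord (nxt n k))) then (1:ℕ) else 0))
      + (∑ k ∈ Finset.range n, (if ¬(ord n < ord k) ∧ ¬(ord n < ord (nxt n k))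
          then (1:ℕ) else 0))
      + (∑ k ∈ Finset.range n, (if (ord n < ord k) ∧ (ord n < ord (nxt n k))
          then (1:ℕ) else 0)) = n := by
    rw [← Finset.sum_add_distrib, ← Finset.sum_add_distrib]
    rw [Finset.sum_congr rfl (fun k hk => mixone hn hHom (Finset.mem_range.1 hk))]
    simp
  have hev1 := hroleeven 1
  have hev2 := hroleeven 2
  rw [hrolesplit 1] at hev1
  rw [hrolesplit 2] at hev2
  have hevmix := mix_even hn (ord := ord)
  rw [Nat.even_iff] at hev1 hev2 hevmix
  omega

end

end MP
namespace MP

section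
variable {n : ℕ} {ord : ℕ → ℕ} {E : Set (ℕ × ℕ × ℕ)} {f : Finset ℕ → ℕ}
  (hn : 3 ≤ n) (hOr : Oriented E) (hHom : IsPairHom (linkCycle n) ord E f)

include hn hHom

lemma berge_ratio (hb : HasBergeCycle (Simg n ord f)) :
    ∃ r ∈ ratioSet n ord f, 1 / 2 ≤ r := by
  classical
  obtain ⟨t, ht2, vf, ef, hvinj, heinj, hmem⟩ := hb
  haveI : NeZero t := ⟨by omega⟩
  haveI : Fact (1 < t) := ⟨by omega⟩
  have hch : ∀ i : ZMod t, ∃ k, k < n ∧ Sv n ord f k = ef i := fun i => (hmem i).1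
  choose ki hki1 hki2 using hch
  set K : Finset ℕ := Finset.image ki Finset.univ with hK
  have hKsub : K ⊆ Finset.range n := by
    intro x hx
    obtain ⟨i, -, rfl⟩ := Finset.mem_image.1 hx
    exact Finset.mem_range.2 (hki1 i)
  have hKne : K.Nonempty := ⟨ki 0, Finset.mem_image.2 ⟨0, Finset.mem_univ _, rfl⟩⟩
  have himg : K.image (Tt n ord f) = Finset.univ.image (fun i => Tt n ord f (ki i)) := by
    rw [hK, Finset.image_image]
    rfl
  have hecard : (K.image (Tt n ord f)).card = t := by
    rw [himg, Finset.card_image_of_injOn]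
    · rw [Finset.card_univ, ZMod.card]
    · intro i _ j _ h
      simp only [] at h
      apply heinj
      rw [← hki2 i, ← hki2 j]
      unfold Sv
      rw [h]
  have hbi : K.biUnion (Sv n ord f) = Finset.univ.biUnion (fun i => ef i) := by
    rw [hK, Finset.image_biUnion]
    apply Finset.biUnion_congr rfl
    intro i _
    exact hki2 i
  have hone : (1 : ZMod t) ≠ 0 := one_ne_zero
  have hvne : ∀ i : ZMod t, vf i ≠ vf (i + 1) := by
    intro i h
    have := hvinj h
    have : (1 : ZMod t) = 0 := by
      have h2 : i + 1 = i + 0 := by rw [add_zero]; exact this.symm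
      exact add_left_cancel h2
    exact hone this
  have hvcard : (K.biUnion (Sv n ord f)).card ≤ 2 * t := by
    rw [hbi]
    have hsub : Finset.univ.biUnion (fun i : ZMod t => ef i) ⊆
        (Finset.univ.image vf) ∪
          Finset.univ.biUnion (fun i : ZMod t => ef i \ {vf i, vf (i + 1)}) := by
      intro x hx
      obtain ⟨i, -, hxi⟩ := Finset.mem_biUnion.1 hx
      by_cases hc : x = vf i ∨ x = vf (i + 1)
      · rcases hc with rfl | rfl
        · exact Finset.mem_union_left _ (Finset.mem_image.2 ⟨i, Finset.mem_univ _, rfl⟩)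
        · exact Finset.mem_union_left _ (Finset.mem_image.2 ⟨i + 1, Finset.mem_univ _, rfl⟩)
      · push_neg at hc
        refine Finset.mem_union_right _ (Finset.mem_biUnion.2 ⟨i, Finset.mem_univ _, ?_⟩)
        rw [Finset.mem_sdiff]
        exact ⟨hxi, by rw [mem_pair_iff]; tauto⟩
    refine le_trans (Finset.card_le_card hsub) ?_
    refine le_trans (Finset.card_union_le _ _) ?_
    have h1 : (Finset.univ.image vf).card ≤ t := by
      refine le_trans Finset.card_image_le ?_
      rw [Finset.card_univ, ZMod.card]
    have h2 : (Finset.univ.biUnion (fun i : ZMod t => ef i \ {vf i, vf (i + 1)})).card ≤ t := by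
      refine le_trans Finset.card_biUnion_le ?_
      have hb1 : ∀ i : ZMod t, (ef i \ {vf i, vf (i + 1)}).card ≤ 1 := by
        intro i
        have hc3 : (ef i).card = 3 := by
          rw [← hki2 i]
          exact Sv_card hn hHom (hki1 i)
        have hpairsub : ({vf i, vf (i + 1)} : Finset ℕ) ⊆ ef i := by
          intro x hx
          rw [mem_pair_iff] at hx
          rcases hx with rfl | rfl
          · exact (hmem i).2.1
          · exact (hmem i).2.2
        rw [Finset.card_sdiff_of_subset hpairsub, hc3, Finset.card_pair (hvne i)]
      refine le_trans (Finset.sum_le_sum (fun i _ => hb1 i)) ?_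
      rw [Finset.sum_const, Finset.card_univ, ZMod.card, smul_eq_mul]
      omega
    omega
  refine ⟨((K.image (Tt n ord f)).card : ℝ) / ((K.biUnion (Sv n ord f)).card : ℝ), ?_, ?_⟩
  · rw [ratioSet_eq hn hHom.1]
    exact ⟨K, hKsub, hKne, rfl⟩
  · rw [hecard]
    exact ratio_ge_half (by omega : (K.biUnion (Sv n ord f)).card ≤ 2 * t) (vK_pos hKne)

include hOr in
lemma lower_half (hodd : n % 2 = 1) : 1 / 2 ≤ sSup (ratioSet n ord f) := by
  by_cases hb : HasBergeCycle (Simg n ord f)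
  · exact sSup_ge_half hn hHom.1 (berge_ratio hn hHom hb)
  · exact (parity_contradiction hn hOr hHom (by omega) hb).elim

end

end MP
/-- For `n ≥ 3`, `m_pair(L_n^{(3)}) = 1/2` if `n` is odd and `= 1/3` if `n`
is even. -/
theorem mpair_linkCycle (n : ℕ) (hn : 3 ≤ n) :
    (Odd n → mpair (linkCycle n) = 1 / 2) ∧
    (Even n → mpair (linkCycle n) = 1 / 3) := by
  constructor
  · intro hodd
    have hodd' : n % 2 = 1 := Nat.odd_iff.1 hodd
    unfold mpair
    apply le_antisymm
    · apply csInf_le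
      · refine ⟨(1:ℝ)/3, ?_⟩
        rintro q ⟨ord, E, f, hOr, hHom, rfl⟩
        exact MP.sSup_ge_third hn hHom.1
      · exact ⟨id, MP.Eodd n, MP.fenc, MP.Eodd_oriented hn, MP.hom_odd hn,
          (MP.sSup_odd hn).symm⟩
    · apply le_csInf
      · exact ⟨1/2, id, MP.Eodd n, MP.fenc, MP.Eodd_oriented hn, MP.hom_odd hn,
          (MP.sSup_odd hn).symm⟩
      · rintro q ⟨ord, E, f, hOr, hHom, rfl⟩
        exact MP.lower_half hn hOr hHom hodd'
  · intro heven
    have heven' : n % 2 = 0 := Nat.even_iff.1 heven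
    unfold mpair
    apply le_antisymm
    · apply csInf_le
      · refine ⟨(1:ℝ)/3, ?_⟩
        rintro q ⟨ord, E, f, hOr, hHom, rfl⟩
        exact MP.sSup_ge_third hn hHom.1
      · exact ⟨MP.ordE n, {((0:ℕ),(1:ℕ),(2:ℕ))}, MP.fE n, MP.orientedE,
          MP.homE hn heven', (MP.sSupE hn heven').symm⟩
    · apply le_csInf
      · exact ⟨1/3, MP.ordE n, {((0:ℕ),(1:ℕ),(2:ℕ))}, MP.fE n, MP.orientedE,
          MP.homE hn heven', (MP.sSupE hn heven').symm⟩
      · rintro q ⟨ord, E, f, hOr, hHom, rfl⟩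
        exact MP.sSup_ge_third hn hHom.1
end

section
/- For every 3-graph H and every integer n ≥ 1, r(H, K_{n,n,n}^(3)) ≤ r(H, K_{1,n,n}^(3))^{3n}. -/
section AuxiliaryLemmas


lemma pow_sub_bound (a b : ℕ) : ∀ t : ℕ, a^(t+1) ≤ (a-b)^(t+1) + (t+1)*b*a^t := by
  intro t
  induction t with
  | zero => simpa using (by omega : a ≤ a - b + b)
  | succ t ih =>
    calc a^(t+1+1) = a * a^(t+1) := by ring
    _ ≤ a * ((a-b)^(t+1) + (t+1)*b*a^t) := Nat.mul_le_mul_left _ ih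
    _ = a*(a-b)^(t+1) + (t+1)*b*(a*a^t) := by ring
    _ ≤ ((a-b)+b)*(a-b)^(t+1) + (t+1)*b*a^(t+1) := by
        have h1 : a ≤ (a-b)+b := by omega
        have h2 : a*a^t = a^(t+1) := by ring
        rw [h2]
        gcongr
    _ = (a-b)^(t+1+1) + b*(a-b)^(t+1) + (t+1)*b*a^(t+1) := by ring
    _ ≤ (a-b)^(t+1+1) + b*a^(t+1) + (t+1)*b*a^(t+1) := by
        have h3 : (a-b)^(t+1) ≤ a^(t+1) := Nat.pow_le_pow_left (Nat.sub_le a b) _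
        gcongr
    _ = (a-b)^(t+1+1) + (t+1+1)*b*a^(t+1) := by ring

lemma red_num {n m : ℕ} (hn : 2 ≤ n) (hm : 2*n+1 ≤ m) :
    (n-1)*m^(2*n+1) + (2*n+1)*(2*n)*4 < 4*m^(3*n) := by
  obtain ⟨p, rfl⟩ : ∃ p, n = p + 2 := ⟨n - 2, by omega⟩
  have hm1 : 1 ≤ m := by omega
  have e1 : m^(3*(p+2)) = m^(2*(p+2)+1) * m^(p+1) := by
    rw [← pow_add]; congr 1; omega
  rw [e1]
  set q := m^(2*(p+2)+1) with hq
  have hq2 : m^2 ≤ q := Nat.pow_le_pow_right hm1 (by omega)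
  have hq3 : (2*p+5)^2 ≤ m^2 := Nat.pow_le_pow_left (by omega) 2
  have hqt : (2*p+5)^2 ≤ q := le_trans hq3 hq2
  have hs : 2*p+5 ≤ m^(p+1) := le_trans (by omega) (Nat.le_self_pow (by omega) m)
  have key : 4*(q*(2*p+5)) ≤ 4*(q*m^(p+1)) := by
    have := Nat.mul_le_mul_left q hs
    omega
  have expand : (p+2-1) = p+1 := by omega
  rw [expand]
  nlinarith [hqt, key]

lemma core_num {n m : ℕ} (hn : 2 ≤ n) (hm : 2*n+1 ≤ m) :
    (n-1) * (m^(3*n))^(2*n) * m^(2*n+1) < 4 * ((m^(3*n)) - 2*n)^(2*n+1) := by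
  set N := m^(3*n) with hN
  have hP : 0 < N^(2*n) := pow_pos (pow_pos (by omega) _) _
  have key : N^(2*n+1) ≤ (N-2*n)^(2*n+1) + (2*n+1)*(2*n)*N^(2*n) := pow_sub_bound N (2*n) (2*n)
  have red : (n-1)*m^(2*n+1) + (2*n+1)*(2*n)*4 < 4*N := red_num hn hm
  have red2 : ((n-1)*m^(2*n+1) + (2*n+1)*(2*n)*4) * N^(2*n) < (4*N) * N^(2*n) :=
    (Nat.mul_lt_mul_right hP).mpr red
  have e2 : (4*N) * N^(2*n) = 4 * N^(2*n+1) := by ring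
  have e3 : 4 * N^(2*n+1) ≤ 4*(N-2*n)^(2*n+1) + 4*((2*n+1)*(2*n)*N^(2*n)) := by omega
  calc (n-1) * N^(2*n) * m^(2*n+1)
      = (n-1)*m^(2*n+1) * N^(2*n) := by ring
    _ < 4*(N-2*n)^(2*n+1) := by
        have h4 : ((n-1)*m^(2*n+1)) * N^(2*n) + ((2*n+1)*(2*n)*4) * N^(2*n)
            = ((n-1)*m^(2*n+1) + (2*n+1)*(2*n)*4) * N^(2*n) := by ring
        have h5 : 4*((2*n+1)*(2*n)*N^(2*n)) = ((2*n+1)*(2*n)*4) * N^(2*n) := by ring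
        omega

lemma choose_ineq {n m : ℕ} (hn : 2 ≤ n) (hm : 2*n+1 ≤ m) :
    (n-1) * (Nat.choose (m^(3*n)) n * Nat.choose (m^(3*n)) n) * Nat.choose m (2*n+1)
      < Nat.choose (m^(3*n)) (2*n+1) := by
  set N := m^(3*n) with hN
  set k := 2*n+1 with hk
  have hfacpos : 0 < (Nat.factorial n * Nat.factorial n * Nat.factorial k) := by positivity
  have main : (n-1) * (N.choose n * N.choose n) * Nat.choose m k
      * (Nat.factorial n * Nat.factorial n * Nat.factorial k)
      < N.choose k * (Nat.factorial n * Nat.factorial n * Nat.factorial k) := by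
    have e1 : (n-1) * (N.choose n * N.choose n) * Nat.choose m k
        * (Nat.factorial n * Nat.factorial n * Nat.factorial k)
        = (n-1) * ((Nat.factorial n * N.choose n) * (Nat.factorial n * N.choose n))
          * (Nat.factorial k * Nat.choose m k) := by ring
    have e2 : Nat.factorial n * N.choose n = N.descFactorial n :=
      (Nat.descFactorial_eq_factorial_mul_choose N n).symm
    have e3 : Nat.factorial k * Nat.choose m k = m.descFactorial k :=
      (Nat.descFactorial_eq_factorial_mul_choose m k).symm
    have e4 : N.choose k * (Nat.factorial n * Nat.factorial n * Nat.factorial k)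
        = (Nat.factorial k * N.choose k) * (Nat.factorial n * Nat.factorial n) := by ring
    have e5 : Nat.factorial k * N.choose k = N.descFactorial k :=
      (Nat.descFactorial_eq_factorial_mul_choose N k).symm
    rw [e1, e2, e3, e4, e5]
    have hfac2 : 2 ≤ Nat.factorial n := le_trans hn (Nat.self_le_factorial n)
    have h4 : 4 ≤ Nat.factorial n * Nat.factorial n := by nlinarith
    calc (n-1) * (N.descFactorial n * N.descFactorial n) * m.descFactorial k
        ≤ (n-1) * (N^n * N^n) * m^k := by
          gcongr <;> exact Nat.descFactorial_le_pow _ _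
      _ = (n-1) * N^(2*n) * m^k := by rw [← pow_add]; ring_nf
      _ < 4 * (N - 2*n)^k := core_num hn hm
      _ ≤ ((N+1-k)^k) * (Nat.factorial n * Nat.factorial n) := by
          have e6 : N + 1 - k = N - 2*n := by omega
          rw [e6]
          calc 4 * (N-2*n)^k ≤ (Nat.factorial n * Nat.factorial n) * (N-2*n)^k := by gcongr
            _ = (N-2*n)^k * (Nat.factorial n * Nat.factorial n) := by ring
      _ ≤ N.descFactorial k * (Nat.factorial n * Nat.factorial n) := by
          gcongr
          exact Nat.pow_sub_le_descFactorial N k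
  exact lt_of_mul_lt_mul_right main (Nat.zero_le _)

lemma tri_mem_edges (a b c x y z : ℕ) (hx : x < a) (hy1 : a ≤ y) (hy2 : y < a+b)
    (hz1 : a+b ≤ z) (hz2 : z < a+b+c) : ({x,y,z} : Finset ℕ) ∈ (tripartite a b c).edges := by
  have hxy : x ≠ y := by omega
  have hxz : x ≠ z := by omega
  have hyz : y ≠ z := by omega
  have hmem : ∀ w, w ∈ ({x,y,z} : Finset ℕ) ↔ (w = x ∨ w = y ∨ w = z) := by
    intro w; simp
  simp only [tripartite, Finset.mem_filter, Finset.mem_powersetCard]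
  refine ⟨⟨?_, ?_⟩, ?_, ?_, ?_⟩
  · intro w hw
    rcases (hmem w).mp hw with h|h|h <;> subst h <;> simp only [Finset.mem_range] <;> omega
  · rw [Finset.card_insert_of_notMem (by simp [hxy, hxz]),
      Finset.card_insert_of_notMem (by simp [hyz]), Finset.card_singleton]
  · have h : Finset.filter (fun w => w < a) ({x,y,z} : Finset ℕ) = {x} := by
      ext w
      simp only [Finset.mem_filter, hmem, Finset.mem_singleton]
      constructor
      · rintro ⟨h|h|h, hw⟩ <;> omega
      · rintro rfl; exact ⟨Or.inl rfl, hx⟩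
    rw [h, Finset.card_singleton]
  · have h : Finset.filter (fun w => a ≤ w ∧ w < a + b) ({x,y,z} : Finset ℕ) = {y} := by
      ext w
      simp only [Finset.mem_filter, hmem, Finset.mem_singleton]
      constructor
      · rintro ⟨h|h|h, hw⟩ <;> omega
      · rintro rfl; exact ⟨Or.inr (Or.inl rfl), hy1, hy2⟩
    rw [h, Finset.card_singleton]
  · have h : Finset.filter (fun w => a + b ≤ w) ({x,y,z} : Finset ℕ) = {z} := by
      ext w
      simp only [Finset.mem_filter, hmem, Finset.mem_singleton]
      constructor
      · rintro ⟨h|h|h, hw⟩ <;> omega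
      · rintro rfl; exact ⟨Or.inr (Or.inr rfl), hz1⟩
    rw [h, Finset.card_singleton]

lemma tri_edge_decomp {a b c : ℕ} {e : Finset ℕ} (he : e ∈ (tripartite a b c).edges) :
    ∃ x y z, x < a ∧ a ≤ y ∧ y < a+b ∧ a+b ≤ z ∧ z < a+b+c ∧ e = {x,y,z} := by
  simp only [tripartite, Finset.mem_filter, Finset.mem_powersetCard] at he
  obtain ⟨⟨hsub, hcard⟩, h1, h2, h3⟩ := he
  obtain ⟨x, hx⟩ := Finset.card_eq_one.mp h1
  obtain ⟨y, hy⟩ := Finset.card_eq_one.mp h2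
  obtain ⟨z, hz⟩ := Finset.card_eq_one.mp h3
  have hxm := Finset.mem_filter.mp (hx ▸ Finset.mem_singleton_self x)
  have hym := Finset.mem_filter.mp (hy ▸ Finset.mem_singleton_self y)
  have hzm := Finset.mem_filter.mp (hz ▸ Finset.mem_singleton_self z)
  refine ⟨x, y, z, hxm.2, hym.2.1, hym.2.2, hzm.2, Finset.mem_range.mp (hsub hzm.1), ?_⟩
  apply Finset.Subset.antisymm
  · intro w hw
    have hwr : w < a + b + c := Finset.mem_range.mp (hsub hw)
    simp only [Finset.mem_insert, Finset.mem_singleton]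
    rcases lt_or_ge w a with h | h
    · left
      have : w ∈ Finset.filter (fun x => x < a) e := Finset.mem_filter.mpr ⟨hw, h⟩
      rw [hx] at this; exact Finset.mem_singleton.mp this
    · rcases lt_or_ge w (a+b) with h' | h'
      · right; left
        have : w ∈ Finset.filter (fun x => a ≤ x ∧ x < a + b) e :=
          Finset.mem_filter.mpr ⟨hw, h, h'⟩
        rw [hy] at this; exact Finset.mem_singleton.mp this
      · right; right
        have : w ∈ Finset.filter (fun x => a + b ≤ x) e := Finset.mem_filter.mpr ⟨hw, h'⟩
        rw [hz] at this; exact Finset.mem_singleton.mp this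
  · intro w hw
    simp only [Finset.mem_insert, Finset.mem_singleton] at hw
    rcases hw with rfl | rfl | rfl
    exacts [hxm.1, hym.1, hzm.1]


lemma exists_enum (S : Finset ℕ) (k : ℕ) (h : S.card = k) :
    ∃ g : ℕ → ℕ, (∀ i j, i < k → j < k → g i = g j → i = j) ∧ ∀ i, i < k → g i ∈ S := by
  classical
  refine ⟨fun i => if hi : i < k then S.orderEmbOfFin h ⟨i, hi⟩ else 0, ?_, ?_⟩
  · intro i j hi hj hij
    simp only [dif_pos hi, dif_pos hj] at hij
    have := (S.orderEmbOfFin h).injective hij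
    exact congrArg Fin.val this
  · intro i hi
    simp only [dif_pos hi]
    exact S.orderEmbOfFin_mem h ⟨i, hi⟩

lemma build_blue {χ : Finset ℕ → Bool} {n N : ℕ} {A B C : Finset ℕ}
    (hA : A.card = n) (hB : B.card = n) (hC : C.card = n)
    (hAN : A ⊆ Finset.range N) (hBN : B ⊆ Finset.range N) (hCN : C ⊆ Finset.range N)
    (hAB : Disjoint A B) (hAC : Disjoint A C) (hBC : Disjoint B C)
    (hblue : ∀ a ∈ A, ∀ b ∈ B, ∀ c ∈ C, χ {a,b,c} = false) :
    hasMonoCopy N χ (tripartite n n n) false := by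
  classical
  obtain ⟨gA, hgAinj, hgAmem⟩ := exists_enum A n hA
  obtain ⟨gB, hgBinj, hgBmem⟩ := exists_enum B n hB
  obtain ⟨gC, hgCinj, hgCmem⟩ := exists_enum C n hC
  set φ : ℕ → ℕ := fun x => if x < n then gA x else if x < n+n then gB (x-n) else gC (x-(n+n))
    with hφ
  have hverts : (tripartite n n n).verts = Finset.range (n+n+n) := rfl
  have hval : ∀ x, x < n+n+n →
      (x < n ∧ φ x ∈ A) ∨ (n ≤ x ∧ x < n+n ∧ φ x ∈ B) ∨ (n+n ≤ x ∧ x < n+n+n ∧ φ x ∈ C) := by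
    intro x hx
    rcases lt_or_ge x n with h | h
    · left; exact ⟨h, by simp only [hφ, if_pos h]; exact hgAmem x h⟩
    · rcases lt_or_ge x (n+n) with h' | h'
      · right; left
        refine ⟨h, h', ?_⟩
        simp only [hφ, if_neg (by omega : ¬ x < n), if_pos h']
        exact hgBmem _ (by omega)
      · right; right
        refine ⟨h', hx, ?_⟩
        simp only [hφ, if_neg (by omega : ¬ x < n), if_neg (by omega : ¬ x < n+n)]
        exact hgCmem _ (by omega)
  have hinj : ∀ u v, u < n+n+n → v < n+n+n → φ u = φ v → u = v := by
    intro u v hu hv huv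
    rcases hval u hu with ⟨h1, m1⟩ | ⟨h1, h1', m1⟩ | ⟨h1, h1', m1⟩ <;>
      rcases hval v hv with ⟨h2, m2⟩ | ⟨h2, h2', m2⟩ | ⟨h2, h2', m2⟩
    · have : φ u = gA u := by simp [hφ, h1]
      have hv' : φ v = gA v := by simp [hφ, h2]
      exact hgAinj u v h1 h2 (by rw [← this, ← hv', huv])
    · exact ((Finset.disjoint_left.mp hAB m1 (huv ▸ m2 : φ u ∈ B))).elim
    · exact ((Finset.disjoint_left.mp hAC m1 (huv ▸ m2 : φ u ∈ C))).elim
    · exact ((Finset.disjoint_left.mp hAB m2 (huv.symm ▸ m1 : φ v ∈ B))).elim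
    · have e1 : φ u = gB (u-n) := by simp [hφ, if_neg (by omega : ¬ u < n), if_pos h1']
      have e2 : φ v = gB (v-n) := by simp [hφ, if_neg (by omega : ¬ v < n), if_pos h2']
      have := hgBinj (u-n) (v-n) (by omega) (by omega) (by rw [← e1, ← e2, huv])
      omega
    · exact ((Finset.disjoint_left.mp hBC m1 (huv ▸ m2 : φ u ∈ C))).elim
    · exact ((Finset.disjoint_left.mp hAC m2 (huv.symm ▸ m1 : φ v ∈ C))).elim
    · exact ((Finset.disjoint_left.mp hBC m2 (huv.symm ▸ m1 : φ v ∈ C))).elim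
    · have e1 : φ u = gC (u-(n+n)) := by
        simp [hφ, if_neg (by omega : ¬ u < n), if_neg (by omega : ¬ u < n+n)]
      have e2 : φ v = gC (v-(n+n)) := by
        simp [hφ, if_neg (by omega : ¬ v < n), if_neg (by omega : ¬ v < n+n)]
      have := hgCinj (u-(n+n)) (v-(n+n)) (by omega) (by omega) (by rw [← e1, ← e2, huv])
      omega
  refine ⟨φ, ?_, ?_, ?_⟩
  · intro u hu v hv huv
    rw [hverts] at hu hv
    simp only [Finset.coe_range, Set.mem_Iio] at hu hv
    exact hinj u v hu hv huv
  · intro v hv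
    rw [hverts, Finset.mem_range] at hv
    rcases hval v hv with ⟨_, m⟩ | ⟨_, _, m⟩ | ⟨_, _, m⟩
    exacts [Finset.mem_range.mp (hAN m), Finset.mem_range.mp (hBN m), Finset.mem_range.mp (hCN m)]
  · intro e he
    obtain ⟨x, y, z, hx, hy1, hy2, hz1, hz2, rfl⟩ := tri_edge_decomp he
    have himg : ({x,y,z} : Finset ℕ).image φ = {φ x, φ y, φ z} := by
      simp [Finset.image_insert]
    rw [himg]
    have hxA : φ x ∈ A := by
      rcases hval x (by omega) with ⟨_, m⟩ | ⟨h, _, _⟩ | ⟨h, _, _⟩ <;> first | exact m | omega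
    have hyB : φ y ∈ B := by
      rcases hval y (by omega) with ⟨h, _⟩ | ⟨_, _, m⟩ | ⟨h, _, _⟩ <;> first | exact m | omega
    have hzC : φ z ∈ C := by
      rcases hval z (by omega) with ⟨h, _⟩ | ⟨_, h, _⟩ | ⟨_, _, m⟩ <;> first | exact m | omega
    exact hblue _ hxA _ hyB _ hzC

lemma stepA {H : ThreeGraph} {n m N : ℕ}
    (hm : ∀ χ : Finset ℕ → Bool, hasMonoCopy m χ H true ∨ hasMonoCopy m χ (tripartite 1 n n) false)
    {χ : Finset ℕ → Bool} (hnored : ¬ hasMonoCopy N χ H true)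
    {S : Finset ℕ} (hS : S ⊆ Finset.range N) (hcard : S.card = m) :
    ∃ a B C, a ∈ S ∧ B ⊆ S ∧ C ⊆ S ∧ B.card = n ∧ C.card = n ∧
      a ∉ B ∧ a ∉ C ∧ Disjoint B C ∧ ∀ b ∈ B, ∀ c ∈ C, χ {a,b,c} = false := by
  classical
  obtain ⟨g, ginj, gmem⟩ := exists_enum S m hcard
  set χ' : Finset ℕ → Bool := fun t => χ (t.image g) with hχ'
  rcases hm χ' with ⟨φ, hφinj, hφlt, hφred⟩ | ⟨ψ, hψinj, hψlt, hψblue⟩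
  · exfalso; apply hnored
    refine ⟨g ∘ φ, ?_, ?_, ?_⟩
    · intro u hu v hv huv
      exact hφinj hu hv (ginj _ _ (hφlt u hu) (hφlt v hv) huv)
    · intro v hv
      exact Finset.mem_range.mp (hS (gmem _ (hφlt v hv)))
    · intro e he
      have h : χ ((e.image φ).image g) = true := hφred e he
      rwa [Finset.image_image] at h
  · -- blue K_{1,n,n} found
    have hverts : (tripartite 1 n n).verts = Finset.range (1+n+n) := rfl
    set ρ : ℕ → ℕ := g ∘ ψ with hρ
    have hψlt' : ∀ i, i < 1+n+n → ψ i < m := by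
      intro i hi; exact hψlt i (by rw [hverts]; exact Finset.mem_range.mpr hi)
    have hρinj : ∀ i j, i < 1+n+n → j < 1+n+n → ρ i = ρ j → i = j := by
      intro i j hi hj hij
      have := ginj _ _ (hψlt' i hi) (hψlt' j hj) hij
      have h2 := hψinj (by rw [hverts]; simpa using hi) (by rw [hverts]; simpa using hj) this
      exact h2
    have hρmem : ∀ i, i < 1+n+n → ρ i ∈ S := fun i hi => gmem _ (hψlt' i hi)
    refine ⟨ρ 0, (Finset.Ico 1 (1+n)).image ρ, (Finset.Ico (1+n) (1+n+n)).image ρ,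
      hρmem 0 (by omega), ?_, ?_, ?_, ?_, ?_, ?_, ?_, ?_⟩
    · intro x hx
      obtain ⟨i, hi, rfl⟩ := Finset.mem_image.mp hx
      exact hρmem i (by have := Finset.mem_Ico.mp hi; omega)
    · intro x hx
      obtain ⟨i, hi, rfl⟩ := Finset.mem_image.mp hx
      exact hρmem i (by have := Finset.mem_Ico.mp hi; omega)
    · rw [Finset.card_image_of_injOn, Nat.card_Ico]
      · omega
      · intro i hi j hj hij
        simp only [Finset.coe_Ico, Set.mem_Ico] at hi hj
        exact hρinj i j (by omega) (by omega) hij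
    · rw [Finset.card_image_of_injOn, Nat.card_Ico]
      · omega
      · intro i hi j hj hij
        simp only [Finset.coe_Ico, Set.mem_Ico] at hi hj
        exact hρinj i j (by omega) (by omega) hij
    · intro hmem
      obtain ⟨i, hi, hieq⟩ := Finset.mem_image.mp hmem
      have := Finset.mem_Ico.mp hi
      have := hρinj i 0 (by omega) (by omega) hieq
      omega
    · intro hmem
      obtain ⟨i, hi, hieq⟩ := Finset.mem_image.mp hmem
      have := Finset.mem_Ico.mp hi
      have := hρinj i 0 (by omega) (by omega) hieq
      omega
    · rw [Finset.disjoint_left]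
      intro x hx hx'
      obtain ⟨i, hi, rfl⟩ := Finset.mem_image.mp hx
      obtain ⟨j, hj, hji⟩ := Finset.mem_image.mp hx'
      have h1 := Finset.mem_Ico.mp hi
      have h2 := Finset.mem_Ico.mp hj
      have := hρinj j i (by omega) (by omega) hji
      omega
    · intro b hb c hc
      obtain ⟨i, hi, rfl⟩ := Finset.mem_image.mp hb
      obtain ⟨j, hj, rfl⟩ := Finset.mem_image.mp hc
      have h1 := Finset.mem_Ico.mp hi
      have h2 := Finset.mem_Ico.mp hj
      have hedge : ({0, i, j} : Finset ℕ) ∈ (tripartite 1 n n).edges :=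
        tri_mem_edges 1 n n 0 i j (by omega) (by omega) (by omega) (by omega) (by omega)
      have hout : χ ((({0, i, j} : Finset ℕ).image ψ).image g) = false := hψblue _ hedge
      rw [Finset.image_image] at hout
      have himg : ({0, i, j} : Finset ℕ).image (g ∘ ψ) = {ρ 0, ρ i, ρ j} := by
        simp [Finset.image_insert, hρ]
      rwa [himg] at hout

lemma main_step {H : ThreeGraph} {n m : ℕ} (hn : 2 ≤ n) (hm2 : 2*n+1 ≤ m)
    (hm : ∀ χ : Finset ℕ → Bool,
      hasMonoCopy m χ H true ∨ hasMonoCopy m χ (tripartite 1 n n) false) :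
    ∀ χ : Finset ℕ → Bool,
      hasMonoCopy (m^(3*n)) χ H true ∨ hasMonoCopy (m^(3*n)) χ (tripartite n n n) false := by
  classical
  intro χ
  by_contra hcon
  rw [not_or] at hcon
  obtain ⟨hred, hblue⟩ := hcon
  set N := m^(3*n) with hN
  set k := 2*n+1 with hk
  have hmN : m ≤ N := Nat.le_self_pow (by omega) m
  set Pm := (Finset.range N).powersetCard m with hPm
  set Copies := ((Finset.range N) ×ˢ (((Finset.range N).powersetCard n) ×ˢ
      ((Finset.range N).powersetCard n))).filter
      (fun p => p.1 ∉ p.2.1 ∧ p.1 ∉ p.2.2 ∧ Disjoint p.2.1 p.2.2 ∧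
        ∀ b ∈ p.2.1, ∀ c ∈ p.2.2, χ {p.1, b, c} = false) with hCopies
  -- membership facts for Copies
  have hCopies_mem : ∀ p : ℕ × Finset ℕ × Finset ℕ, p ∈ Copies ↔
      (p.1 < N ∧ (p.2.1 ⊆ Finset.range N ∧ p.2.1.card = n) ∧
        (p.2.2 ⊆ Finset.range N ∧ p.2.2.card = n)) ∧
      (p.1 ∉ p.2.1 ∧ p.1 ∉ p.2.2 ∧ Disjoint p.2.1 p.2.2 ∧
        ∀ b ∈ p.2.1, ∀ c ∈ p.2.2, χ {p.1, b, c} = false) := by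
    intro p
    rw [hCopies, Finset.mem_filter, Finset.mem_product, Finset.mem_product,
      Finset.mem_powersetCard, Finset.mem_powersetCard, Finset.mem_range]
  -- choice function
  have hex : ∀ S : Finset ℕ, ∃ p : ℕ × Finset ℕ × Finset ℕ, S ∈ Pm →
      p ∈ Copies ∧ p.1 ∈ S ∧ p.2.1 ⊆ S ∧ p.2.2 ⊆ S := by
    intro S
    by_cases hS : S ∈ Pm
    · obtain ⟨hsub, hcard⟩ := Finset.mem_powersetCard.mp hS
      obtain ⟨a, B, C, ha, hB, hC, hBc, hCc, haB, haC, hdisj, hblue'⟩ :=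
        stepA hm hred hsub hcard
      refine ⟨(a, B, C), fun _ => ⟨?_, ha, hB, hC⟩⟩
      rw [hCopies_mem]
      exact ⟨⟨Finset.mem_range.mp (hsub ha), ⟨fun x hx => hsub (hB hx), hBc⟩,
        ⟨fun x hx => hsub (hC hx), hCc⟩⟩, haB, haC, hdisj, hblue'⟩
    · exact ⟨(0, ∅, ∅), fun h => absurd h hS⟩
  choose f hf using hex
  -- image of f lands in Copies
  have himg : Pm.image f ⊆ Copies := by
    intro p hp
    obtain ⟨S, hS, rfl⟩ := Finset.mem_image.mp hp
    exact (hf S hS).1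
  -- fiber bound for f
  have h1 : Pm.card ≤ (Nat.choose (N-k) (m-k)) * (Pm.image f).card := by
    apply Finset.card_le_mul_card_image
    intro p hp
    have hpC := himg hp
    rw [hCopies_mem] at hpC
    obtain ⟨⟨haN, ⟨hBN, hBc⟩, ⟨hCN, hCc⟩⟩, haB, haC, hdisj, _⟩ := hpC
    set K := insert p.1 (p.2.1 ∪ p.2.2) with hK
    have hKcard : K.card = k := by
      rw [hK, Finset.card_insert_of_notMem (by simp [haB, haC]),
        Finset.card_union_of_disjoint hdisj, hBc, hCc, hk]
      omega
    have hKN : K ⊆ Finset.range N := by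
      rw [hK]
      exact Finset.insert_subset (Finset.mem_range.mpr haN) (Finset.union_subset hBN hCN)
    calc (Finset.filter (fun S => f S = p) Pm).card
        ≤ ((Finset.range N \ K).powersetCard (m-k)).card := by
          apply Finset.card_le_card_of_injOn (fun S => S \ K)
          · intro S hS
            rw [Finset.mem_coe, Finset.mem_filter] at hS
            obtain ⟨hSPm, hfS⟩ := hS
            have hfS' := hf S hSPm
            rw [hfS] at hfS'
            have hKS : K ⊆ S := by
              rw [hK]
              exact Finset.insert_subset hfS'.2.1 (Finset.union_subset hfS'.2.2.1 hfS'.2.2.2)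
            obtain ⟨hsub, hcard⟩ := Finset.mem_powersetCard.mp hSPm
            refine Finset.mem_powersetCard.mpr ⟨?_, ?_⟩
            · intro x hx
              rw [Finset.mem_sdiff] at hx ⊢
              exact ⟨hsub hx.1, hx.2⟩
            · rw [Finset.card_sdiff_of_subset hKS, hcard, hKcard]
          · intro S1 hS1 S2 hS2 h12
            rw [Finset.coe_filter] at hS1 hS2
            obtain ⟨hS1Pm, hfS1⟩ := hS1
            obtain ⟨hS2Pm, hfS2⟩ := hS2
            have hK1 : K ⊆ S1 := by
              have h := hf S1 hS1Pm; rw [hfS1] at h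
              rw [hK]; exact Finset.insert_subset h.2.1 (Finset.union_subset h.2.2.1 h.2.2.2)
            have hK2 : K ⊆ S2 := by
              have h := hf S2 hS2Pm; rw [hfS2] at h
              rw [hK]; exact Finset.insert_subset h.2.1 (Finset.union_subset h.2.2.1 h.2.2.2)
            calc S1 = (S1 \ K) ∪ K := (Finset.sdiff_union_of_subset hK1).symm
              _ = (S2 \ K) ∪ K := by rw [show S1 \ K = S2 \ K from h12]
              _ = S2 := Finset.sdiff_union_of_subset hK2
        _ = Nat.choose (N-k) (m-k) := by
          rw [Finset.card_powersetCard, Finset.card_sdiff_of_subset hKN, Finset.card_range, hKcard]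
  -- second bound: Copies.card ≤ (n-1) * (choose N n * choose N n)
  have h2 : Copies.card ≤ (n-1) * (Nat.choose N n * Nat.choose N n) := by
    have hmap : ∀ p ∈ Copies, p.2 ∈ ((Finset.range N).powersetCard n) ×ˢ
        ((Finset.range N).powersetCard n) := by
      intro p hp
      rw [hCopies_mem] at hp
      exact Finset.mem_product.mpr ⟨Finset.mem_powersetCard.mpr hp.1.2.1,
        Finset.mem_powersetCard.mpr hp.1.2.2⟩
    have hbound : ∀ q ∈ ((Finset.range N).powersetCard n) ×ˢ
        ((Finset.range N).powersetCard n),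
        (Finset.filter (fun p => p.2 = q) Copies).card ≤ n - 1 := by
      intro q hq
      by_contra hbig
      push_neg at hbig
      have hbig' : n ≤ (Finset.filter (fun p => p.2 = q) Copies).card := by omega
      -- the apex set
      set Apex := (Finset.filter (fun p => p.2 = q) Copies).image (fun p => p.1) with hApex
      have hApexcard : Apex.card = (Finset.filter (fun p => p.2 = q) Copies).card := by
        rw [hApex]
        apply Finset.card_image_of_injOn
        intro p1 hp1 p2 hp2 h12
        rw [Finset.coe_filter] at hp1 hp2
        have : p1 = (p1.1, p1.2) := rfl
        calc p1 = (p1.1, p1.2) := rfl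
          _ = (p2.1, p2.2) := by rw [show p1.1 = p2.1 from h12, hp1.2, hp2.2]
          _ = p2 := rfl
      obtain ⟨A, hAsub, hAcard⟩ := Finset.exists_subset_card_eq (hApexcard ▸ hbig')
      -- properties of elements of Apex
      have hApexprop : ∀ a ∈ Apex, a < N ∧ a ∉ q.1 ∧ a ∉ q.2 ∧
          ∀ b ∈ q.1, ∀ c ∈ q.2, χ {a, b, c} = false := by
        intro a ha
        obtain ⟨p, hp, rfl⟩ := Finset.mem_image.mp ha
        rw [Finset.mem_filter] at hp
        obtain ⟨hpC, hpq⟩ := hp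
        rw [hCopies_mem] at hpC
        rw [hpq] at hpC
        exact ⟨hpC.1.1, hpC.2.1, hpC.2.2.1, hpC.2.2.2.2⟩
      have hqmem := Finset.mem_product.mp hq
      obtain ⟨hB1, hB2⟩ := Finset.mem_powersetCard.mp hqmem.1
      obtain ⟨hC1, hC2⟩ := Finset.mem_powersetCard.mp hqmem.2
      have hdisjBC : Disjoint q.1 q.2 := by
        have : ∃ p ∈ Copies, p.2 = q := by
          have hne : (Finset.filter (fun p => p.2 = q) Copies).Nonempty := by
            rw [← Finset.card_pos]; omega
          obtain ⟨p, hp⟩ := hne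
          rw [Finset.mem_filter] at hp
          exact ⟨p, hp.1, hp.2⟩
        obtain ⟨p, hpC, hpq⟩ := this
        rw [hCopies_mem] at hpC
        rw [hpq] at hpC
        exact hpC.2.2.2.1
      apply hblue
      apply build_blue hAcard hB2 hC2
      · intro x hx
        exact Finset.mem_range.mpr (hApexprop x (hAsub hx)).1
      · exact hB1
      · exact hC1
      · rw [Finset.disjoint_left]
        intro x hx
        exact (hApexprop x (hAsub hx)).2.1
      · rw [Finset.disjoint_left]
        intro x hx
        exact (hApexprop x (hAsub hx)).2.2.1
      · exact hdisjBC
      · intro a ha b hb c hc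
        exact (hApexprop a (hAsub ha)).2.2.2 b hb c hc
    calc Copies.card ≤ (n-1) * (((Finset.range N).powersetCard n) ×ˢ
        ((Finset.range N).powersetCard n)).card :=
          Finset.card_le_mul_card_image_of_maps_to hmap (n-1) hbound
      _ = (n-1) * (Nat.choose N n * Nat.choose N n) := by
          rw [Finset.card_product, Finset.card_powersetCard, Finset.card_range]
  -- combine
  have hPmcard : Pm.card = Nat.choose N m := by
    rw [hPm, Finset.card_powersetCard, Finset.card_range]
  have himgcard : (Pm.image f).card ≤ Copies.card := Finset.card_le_card himg
  have hmain : Nat.choose N m ≤ Nat.choose (N-k) (m-k) *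
      ((n-1) * (Nat.choose N n * Nat.choose N n)) := by
    calc Nat.choose N m = Pm.card := hPmcard.symm
      _ ≤ (Nat.choose (N-k) (m-k)) * (Pm.image f).card := h1
      _ ≤ (Nat.choose (N-k) (m-k)) * Copies.card := Nat.mul_le_mul_left _ himgcard
      _ ≤ Nat.choose (N-k) (m-k) * ((n-1) * (Nat.choose N n * Nat.choose N n)) :=
          Nat.mul_le_mul_left _ h2
  -- the subset-chain identity
  have hid : Nat.choose N m * Nat.choose m k = Nat.choose N k * Nat.choose (N-k) (m-k) :=
    Nat.choose_mul (by omega)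
  have hpos : 0 < Nat.choose (N-k) (m-k) := Nat.choose_pos (by omega)
  have hfinal : Nat.choose N k ≤ (n-1) * (Nat.choose N n * Nat.choose N n) * Nat.choose m k := by
    have step : Nat.choose N k * Nat.choose (N-k) (m-k) ≤
        ((n-1) * (Nat.choose N n * Nat.choose N n) * Nat.choose m k) * Nat.choose (N-k) (m-k) := by
      calc Nat.choose N k * Nat.choose (N-k) (m-k) = Nat.choose N m * Nat.choose m k := hid.symm
        _ ≤ (Nat.choose (N-k) (m-k) * ((n-1) * (Nat.choose N n * Nat.choose N n)))
            * Nat.choose m k := Nat.mul_le_mul_right _ hmain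
        _ = ((n-1) * (Nat.choose N n * Nat.choose N n) * Nat.choose m k)
            * Nat.choose (N-k) (m-k) := by ring
    exact Nat.le_of_mul_le_mul_right step hpos
  exact absurd hfinal (not_le.mpr (choose_ineq hn hm2))

lemma blue_tri_mono {N n : ℕ} (hn : 1 ≤ n) (χ : Finset ℕ → Bool)
    (h : hasMonoCopy N χ (tripartite n n n) false) :
    hasMonoCopy N χ (tripartite 1 n n) false := by
  obtain ⟨φ, hinj, hlt, hblue⟩ := h
  set ξ : ℕ → ℕ := fun i => if i = 0 then 0 else i + (n-1) with hξ
  have hξmap : ∀ i, i < 1+n+n → ξ i < n+n+n := by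
    intro i hi
    rw [hξ]; dsimp only
    split <;> omega
  have hξinj : ∀ i j, i < 1+n+n → j < 1+n+n → ξ i = ξ j → i = j := by
    intro i j _ _ hij
    rw [hξ] at hij; dsimp only at hij
    split at hij <;> split at hij <;> omega
  have hvertsA : (tripartite 1 n n).verts = Finset.range (1+n+n) := rfl
  have hvertsB : (tripartite n n n).verts = Finset.range (n+n+n) := rfl
  refine ⟨φ ∘ ξ, ?_, ?_, ?_⟩
  · intro u hu v hv huv
    rw [hvertsA] at hu hv
    simp only [Finset.coe_range, Set.mem_Iio] at hu hv
    have h1 := hinj (by rw [hvertsB]; simpa using hξmap u hu)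
      (by rw [hvertsB]; simpa using hξmap v hv) huv
    exact hξinj u v hu hv h1
  · intro v hv
    rw [hvertsA, Finset.mem_range] at hv
    exact hlt _ (by rw [hvertsB, Finset.mem_range]; exact hξmap v hv)
  · intro e he
    obtain ⟨x, y, z, hx, hy1, hy2, hz1, hz2, rfl⟩ := tri_edge_decomp he
    have hx0 : x = 0 := by omega
    subst hx0
    have hedge : ({ξ 0, ξ y, ξ z} : Finset ℕ) ∈ (tripartite n n n).edges := by
      have e0 : ξ 0 = 0 := by simp [hξ]
      have ey : ξ y = y + (n-1) := by rw [hξ]; simp only [if_neg (by omega : ¬ y = 0)]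
      have ez : ξ z = z + (n-1) := by rw [hξ]; simp only [if_neg (by omega : ¬ z = 0)]
      rw [e0, ey, ez]
      exact tri_mem_edges n n n 0 (y+(n-1)) (z+(n-1)) (by omega) (by omega) (by omega)
        (by omega) (by omega)
    have hres := hblue _ hedge
    have himg : ({ξ 0, ξ y, ξ z} : Finset ℕ).image φ = ({0, y, z} : Finset ℕ).image (φ ∘ ξ) := by
      rw [← Finset.image_image]
      congr 1
      simp [Finset.image_insert]
    rwa [himg] at hres


end AuxiliaryLemmas

/-- For every 3-graph `H` and `n ≥ 1`,
`r(H, K_{n,n,n}^{(3)}) ≤ r(H, K_{1,n,n}^{(3)})^{3n}`. -/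
theorem ramsey_tripartite_le_pow (H : ThreeGraph) (n : ℕ) (hn : 1 ≤ n) :
    ramsey H (tripartite n n n) ≤ ramsey H (tripartite 1 n n) ^ (3 * n) := by

  classical
  rcases eq_or_lt_of_le hn with h1 | hn2
  · rw [← h1]
    exact Nat.le_self_pow (by norm_num) _
  have hn2 : 2 ≤ n := hn2
  by_cases hne : {N : ℕ | ∀ χ : Finset ℕ → Bool,
      hasMonoCopy N χ H true ∨ hasMonoCopy N χ (tripartite 1 n n) false}.Nonempty
  · have hmem := Nat.sInf_mem hne
    set m := ramsey H (tripartite 1 n n) with hm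
    have hmem' : ∀ χ : Finset ℕ → Bool,
        hasMonoCopy m χ H true ∨ hasMonoCopy m χ (tripartite 1 n n) false := hmem
    by_cases hm2 : 2*n+1 ≤ m
    · exact Nat.sInf_le (main_step hn2 hm2 hmem')
    · -- m ≤ 2n : blue copies impossible in [m]
      apply Nat.sInf_le
      intro χ
      rcases hmem' χ with ⟨φ, hinj, hlt, hred⟩ | ⟨ψ, hinj, hlt, _⟩
      · left
        refine ⟨φ, hinj, ?_, hred⟩
        intro v hv
        exact lt_of_lt_of_le (hlt v hv) (Nat.le_self_pow (by omega) m)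
      · exfalso
        have hverts : (tripartite 1 n n).verts = Finset.range (1+n+n) := rfl
        have hcard : ((Finset.range (1+n+n)).image ψ).card = 1+n+n := by
          rw [Finset.card_image_of_injOn (by rw [← hverts]; exact hinj), Finset.card_range]
        have hsub : (Finset.range (1+n+n)).image ψ ⊆ Finset.range m := by
          intro x hx
          obtain ⟨v, hv, rfl⟩ := Finset.mem_image.mp hx
          exact Finset.mem_range.mpr (hlt v (by rw [hverts]; exact hv))
        have := Finset.card_le_card hsub
        rw [hcard, Finset.card_range] at this
        omega
  · -- the K_{1,n,n} Ramsey set is empty; then so is the K_{n,n,n} one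
    have hempty : {N : ℕ | ∀ χ : Finset ℕ → Bool,
        hasMonoCopy N χ H true ∨ hasMonoCopy N χ (tripartite n n n) false} = ∅ := by
      rw [Set.eq_empty_iff_forall_notMem]
      intro N hN
      apply hne
      refine ⟨N, ?_⟩
      intro χ
      rcases hN χ with h | h
      · exact Or.inl h
      · exact Or.inr (blue_tri_mono hn χ h)
    rw [ramsey, hempty, Nat.sInf_empty]
    exact Nat.zero_le _
end

section
/- Let H be a 3-graph with at least one edge and let x, y, z ∈ V(H) be three distinct vertices such that {x,y,z} ∉ E(H) and at least one of the pairs {x,y}, {y,z}, {x,z} is not contained in the shadow ∂H. Let H' be the 3-graph obtained from H by adding the edge {x,y,z}. Then for every integer n ≥ 1, r(H', K_{1,n,n}^(3)) ≤ r(H, K_{1,n,n}^(3))^{2 v(H)}, where v(H) = |V(H)|. -/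
section AuxiliaryForStatement12

open Finset


private lemma count_supersets (N r' : ℕ) (P : Finset ℕ) (hP : P ⊆ Finset.range N) :
    (((Finset.range N).powersetCard r').filter (fun S => P ⊆ S)).card
      ≤ (N - P.card).choose (r' - P.card) := by
  classical
  have hinj : Set.InjOn (fun S => S \ P)
      ↑(((Finset.range N).powersetCard r').filter (fun S => P ⊆ S)) := by
    intro S1 h1 S2 h2 h
    simp only [coe_filter, Set.mem_setOf_eq] at h1 h2
    have e1 : S1 \ P ∪ P = S1 := sdiff_union_of_subset h1.2
    have e2 : S2 \ P ∪ P = S2 := sdiff_union_of_subset h2.2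
    rw [← e1, ← e2]
    simp only at h
    rw [h]
  have hmaps : ∀ S ∈ ((Finset.range N).powersetCard r').filter (fun S => P ⊆ S),
      S \ P ∈ (Finset.range N \ P).powersetCard (r' - P.card) := by
    intro S hS
    rw [mem_filter, mem_powersetCard] at hS
    rw [mem_powersetCard]
    constructor
    · intro a ha
      rw [mem_sdiff] at ha ⊢
      exact ⟨hS.1.1 ha.1, ha.2⟩
    · rw [card_sdiff_of_subset hS.2, hS.1.2]
  calc (((Finset.range N).powersetCard r').filter (fun S => P ⊆ S)).card
      ≤ ((Finset.range N \ P).powersetCard (r' - P.card)).card :=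
        card_le_card_of_injOn _ hmaps hinj
    _ = (N - P.card).choose (r' - P.card) := by
        rw [card_powersetCard, card_sdiff_of_subset hP, card_range]

private lemma subset_red_copy (H K : ThreeGraph) {r N : ℕ}
    (hr : ∀ χ : Finset ℕ → Bool, hasMonoCopy r χ H true ∨ hasMonoCopy r χ K false)
    (χ : Finset ℕ → Bool) (hnb : ¬ hasMonoCopy N χ K false)
    (S : Finset ℕ) (hSN : S ⊆ Finset.range N) (hScard : S.card = r) :
    ∃ φ : ℕ → ℕ, Set.InjOn φ ↑H.verts ∧ (∀ a ∈ H.verts, φ a ∈ S) ∧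
      ∀ e ∈ H.edges, χ (e.image φ) = true := by
  classical
  set g : ℕ → ℕ := fun i => if h : i < r then S.orderEmbOfFin hScard ⟨i, h⟩ else 0 with hg
  have hgS : ∀ i, i < r → g i ∈ S := by
    intro i h
    simp only [hg, dif_pos h]
    exact S.orderEmbOfFin_mem hScard _
  have hginj : ∀ i j, i < r → j < r → g i = g j → i = j := by
    intro i j hi hj h
    simp only [hg, dif_pos hi, dif_pos hj] at h
    have := (S.orderEmbOfFin hScard).injective h
    exact Fin.mk.inj_iff.mp this
  rcases hr (fun e => χ (e.image g)) with ⟨φ, h1, h2, h3⟩ | ⟨φ, h1, h2, h3⟩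
  · refine ⟨g ∘ φ, ?_, ?_, ?_⟩
    · intro a ha b hb h
      exact h1 ha hb (hginj _ _ (h2 a ha) (h2 b hb) h)
    · intro a ha; exact hgS _ (h2 a ha)
    · intro e he
      have := h3 e he
      simp only [Finset.image_image] at this
      exact this
  · exfalso
    apply hnb
    refine ⟨g ∘ φ, ?_, ?_, ?_⟩
    · intro a ha b hb h
      exact h1 ha hb (hginj _ _ (h2 a ha) (h2 b hb) h)
    · intro a ha
      have := hSN (hgS _ (h2 a ha))
      exact Finset.mem_range.mp this
    · intro e he
      have := h3 e he
      simp only [Finset.image_image] at this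
      exact this

private lemma trip_edge_mem {n : ℕ} (hn : 1 ≤ n) :
    ({0, 1, 1 + n} : Finset ℕ) ∈ (tripartite 1 n n).edges := by
  have hcard : ({0, 1, 1 + n} : Finset ℕ).card = 3 := by
    rw [card_insert_of_notMem (by simp; omega), card_insert_of_notMem (by simp; omega),
      card_singleton]
  rw [tripartite, mem_filter, mem_powersetCard]
  refine ⟨⟨?_, hcard⟩, ?_, ?_, ?_⟩
  · intro a ha
    simp only [mem_insert, mem_singleton] at ha
    rw [mem_range]
    omega
  · rw [show ({0, 1, 1 + n} : Finset ℕ).filter (fun x => x < 1) = {0} by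
      ext a; simp; omega]
    exact card_singleton 0
  · rw [show ({0, 1, 1 + n} : Finset ℕ).filter (fun x => 1 ≤ x ∧ x < 1 + n) = {1} by
      ext a; simp; omega]
    exact card_singleton 1
  · rw [show ({0, 1, 1 + n} : Finset ℕ).filter (fun x => 1 + n ≤ x) = {1 + n} by
      ext a; simp; omega]
    exact card_singleton (1 + n)

private lemma trip_edge_decomp {n : ℕ} {e : Finset ℕ} (he : e ∈ (tripartite 1 n n).edges) :
    ∃ i j, 1 ≤ i ∧ i < 1 + n ∧ 1 + n ≤ j ∧ j < 1 + n + n ∧ e = {0, i, j} := by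
  rw [tripartite, mem_filter, mem_powersetCard] at he
  obtain ⟨⟨hsub, hcard⟩, h1, h2, h3⟩ := he
  obtain ⟨u0, hu0⟩ := card_eq_one.mp h1
  obtain ⟨u1, hu1⟩ := card_eq_one.mp h2
  obtain ⟨u2, hu2⟩ := card_eq_one.mp h3
  have hu0' : u0 ∈ e ∧ u0 < 1 := by
    have : u0 ∈ e.filter (fun x => x < 1) := hu0 ▸ mem_singleton_self u0
    exact mem_filter.mp this
  have hu1' : u1 ∈ e ∧ 1 ≤ u1 ∧ u1 < 1 + n := by
    have : u1 ∈ e.filter (fun x => 1 ≤ x ∧ x < 1 + n) := hu1 ▸ mem_singleton_self u1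
    exact ⟨(mem_filter.mp this).1, (mem_filter.mp this).2⟩
  have hu2' : u2 ∈ e ∧ 1 + n ≤ u2 := by
    have : u2 ∈ e.filter (fun x => 1 + n ≤ x) := hu2 ▸ mem_singleton_self u2
    exact mem_filter.mp this
  have hu2r : u2 < 1 + n + n := mem_range.mp (hsub hu2'.1)
  have h0 : u0 = 0 := by omega
  refine ⟨u1, u2, hu1'.2.1, hu1'.2.2, hu2'.2, hu2r, ?_⟩
  have hsub2 : ({0, u1, u2} : Finset ℕ) ⊆ e := by
    intro a ha
    simp only [mem_insert, mem_singleton] at ha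
    rcases ha with rfl | rfl | rfl
    · exact h0 ▸ hu0'.1
    · exact hu1'.1
    · exact hu2'.1
  have hc3 : ({0, u1, u2} : Finset ℕ).card = 3 := by
    rw [card_insert_of_notMem (by simp; omega), card_insert_of_notMem (by simp; omega),
      card_singleton]
  exact (eq_of_subset_of_card_le hsub2 (by omega)).symm

private lemma trip_verts_card (n : ℕ) : (tripartite 1 n n).verts.card = 1 + n + n := by
  rw [tripartite]
  exact card_range _

private lemma ramsey_mem_lower (H : ThreeGraph) (hne : H.edges.Nonempty) {n r : ℕ} (hn : 1 ≤ n)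
    (hr : ∀ χ : Finset ℕ → Bool,
      hasMonoCopy r χ H true ∨ hasMonoCopy r χ (tripartite 1 n n) false) :
    H.verts.card ≤ r ∧ 2 * n + 1 ≤ r := by
  constructor
  · rcases hr (fun _ => true) with ⟨φ, h1, h2, _⟩ | ⟨_, _, _, h3⟩
    · calc H.verts.card ≤ (range r).card :=
          card_le_card_of_injOn φ (fun a ha => mem_range.2 (h2 a ha)) h1
        _ = r := card_range r
    · have := h3 _ (trip_edge_mem hn)
      simp at this
  · rcases hr (fun _ => false) with ⟨_, _, _, h3⟩ | ⟨φ, h1, h2, _⟩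
    · obtain ⟨e, he⟩ := hne
      have := h3 e he
      simp at this
    · have hc : (tripartite 1 n n).verts.card ≤ (range r).card :=
        card_le_card_of_injOn φ (fun a ha => mem_range.2 (h2 a ha)) h1
      rw [trip_verts_card, card_range] at hc
      omega


private lemma two_pow_le_three_pow_aux : ∀ m : ℕ, 2 ^ (m + 3) ≤ 3 ^ (m + 2)
  | 0 => by norm_num
  | m + 1 => by
    have h := two_pow_le_three_pow_aux m
    calc 2 ^ (m + 1 + 3) = 2 ^ (m + 3) * 2 := by ring
      _ ≤ 3 ^ (m + 2) * 3 := Nat.mul_le_mul h (by norm_num)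
      _ = 3 ^ (m + 1 + 2) := by ring

private lemma arith_key (n r v : ℕ) (hv : 3 ≤ v) (hvr : v ≤ r) (hnr : 2 * n + 1 ≤ r) :
    (2 * n + 1) * (r ^ (2 * v)) ^ (v - 1) * (r ^ (2 * v) - v).choose (r - v)
      ≤ (r ^ (2 * v)).choose r := by
  have hr3 : 3 ≤ r := by omega
  set N := r ^ (2 * v) with hN
  have hrN : r ≤ N := by
    calc r = r ^ 1 := (pow_one r).symm
    _ ≤ N := Nat.pow_le_pow_right (by omega) (by omega)
  have h2v : 2 * v ≤ N := by
    have h1 : v < 2 ^ v := Nat.lt_two_pow_self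
    have h2 : 2 ^ v ≤ r ^ v := Nat.pow_le_pow_left (by omega) v
    have h3 : 2 * r ^ v ≤ r ^ (v + 1) := by
      rw [pow_succ]
      calc 2 * r ^ v = r ^ v * 2 := by ring
        _ ≤ r ^ v * r := Nat.mul_le_mul_left _ (by omega)
    have h4 : r ^ (v + 1) ≤ r ^ (2 * v) := Nat.pow_le_pow_right (by omega) (by omega)
    omega
  have hNval : N = r ^ v * r ^ v := by rw [hN, ← pow_add]; congr 1; omega
  have hNv : N ^ v = N ^ (v - 1) * (r ^ v * r ^ v) := by
    rw [← hNval]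
    calc N ^ v = N ^ (v - 1 + 1) := by congr 1; omega
      _ = N ^ (v - 1) * N := pow_succ N (v - 1)
  have h5 : 2 ^ v * (2 * n + 1) ≤ r ^ v := by
    have e1 : 2 ^ v ≤ 3 ^ (v - 1) := by
      obtain ⟨m, rfl⟩ : ∃ m, v = m + 3 := ⟨v - 3, by omega⟩
      have := two_pow_le_three_pow_aux m
      calc 2 ^ (m + 3) ≤ 3 ^ (m + 2) := this
        _ = 3 ^ (m + 3 - 1) := by congr 1
    have e2 : 3 ^ (v - 1) ≤ r ^ (v - 1) := Nat.pow_le_pow_left hr3 _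
    calc 2 ^ v * (2 * n + 1) ≤ r ^ (v - 1) * r := Nat.mul_le_mul (e1.trans e2) hnr
      _ = r ^ (v - 1 + 1) := (pow_succ r (v - 1)).symm
      _ = r ^ v := by congr 1; omega
  have key : (2 * n + 1) * N ^ (v - 1) * r ^ v ≤ (N + 1 - v) ^ v := by
    have h2pow : 2 ^ v * ((2 * n + 1) * N ^ (v - 1) * r ^ v) ≤ N ^ v := by
      calc 2 ^ v * ((2 * n + 1) * N ^ (v - 1) * r ^ v)
          = (2 ^ v * (2 * n + 1)) * (N ^ (v - 1) * r ^ v) := by ring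
        _ ≤ r ^ v * (N ^ (v - 1) * r ^ v) := Nat.mul_le_mul_right _ h5
        _ = N ^ (v - 1) * (r ^ v * r ^ v) := by ring
        _ = N ^ v := hNv.symm
    have h6 : N ^ v ≤ 2 ^ v * (N + 1 - v) ^ v := by
      have hle : N ≤ 2 * (N + 1 - v) := by omega
      calc N ^ v ≤ (2 * (N + 1 - v)) ^ v := Nat.pow_le_pow_left hle v
        _ = 2 ^ v * (N + 1 - v) ^ v := mul_pow 2 _ v
    exact Nat.le_of_mul_le_mul_left (h2pow.trans h6) (Nat.pow_pos (by norm_num))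
  have step2 : (2 * n + 1) * N ^ (v - 1) * r.descFactorial v ≤ N.descFactorial v := by
    calc (2 * n + 1) * N ^ (v - 1) * r.descFactorial v
        ≤ (2 * n + 1) * N ^ (v - 1) * r ^ v :=
          Nat.mul_le_mul_left _ (Nat.descFactorial_le_pow r v)
      _ ≤ (N + 1 - v) ^ v := key
      _ ≤ N.descFactorial v := Nat.pow_sub_le_descFactorial N v
  have step3 : (2 * n + 1) * N ^ (v - 1) * r.choose v ≤ N.choose v := by
    have h7 : Nat.factorial v * ((2 * n + 1) * N ^ (v - 1) * r.choose v) ≤ Nat.factorial v * N.choose v := by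
      calc Nat.factorial v * ((2 * n + 1) * N ^ (v - 1) * r.choose v)
          = (2 * n + 1) * N ^ (v - 1) * (Nat.factorial v * r.choose v) := by ring
        _ = (2 * n + 1) * N ^ (v - 1) * r.descFactorial v := by
            rw [← Nat.descFactorial_eq_factorial_mul_choose]
        _ ≤ N.descFactorial v := step2
        _ = Nat.factorial v * N.choose v := Nat.descFactorial_eq_factorial_mul_choose N v
    exact Nat.le_of_mul_le_mul_left h7 (Nat.factorial_pos v)
  have hcm : N.choose r * r.choose v = N.choose v * (N - v).choose (r - v) :=
    Nat.choose_mul (n := N) hvr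
  have hrvpos : 0 < r.choose v := Nat.choose_pos hvr
  apply Nat.le_of_mul_le_mul_right _ hrvpos
  rw [hcm]
  calc (2 * n + 1) * N ^ (v - 1) * (N - v).choose (r - v) * r.choose v
      = ((2 * n + 1) * N ^ (v - 1) * r.choose v) * (N - v).choose (r - v) := by ring
    _ ≤ N.choose v * (N - v).choose (r - v) := Nat.mul_le_mul_right _ step3

set_option maxHeartbeats 2000000 in
private lemma core_lemma (H : ThreeGraph) {n r : ℕ} (hn : 1 ≤ n)
    (p q s : ℕ) (hp : p ∈ H.verts) (hq : q ∈ H.verts) (hs : s ∈ H.verts)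
    (hpq : p ≠ q) (hqs : q ≠ s) (hps : p ≠ s)
    (hsh : ({p, q} : Finset ℕ) ∉ shadowOf H.edges)
    (hr : ∀ χ : Finset ℕ → Bool,
      hasMonoCopy r χ H true ∨ hasMonoCopy r χ (tripartite 1 n n) false)
    (hrv : H.verts.card ≤ r) (hrn : 2 * n + 1 ≤ r)
    (χ : Finset ℕ → Bool)
    (hnb : ¬ hasMonoCopy (r ^ (2 * H.verts.card)) χ (tripartite 1 n n) false) :
    ∃ φ : ℕ → ℕ, Set.InjOn φ ↑H.verts ∧ (∀ a ∈ H.verts, φ a < r ^ (2 * H.verts.card)) ∧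
      (∀ e ∈ H.edges, χ (e.image φ) = true) ∧
      χ (({p, q, s} : Finset ℕ).image φ) = true := by
  classical
  set V := H.verts with hVdef
  set v := V.card with hvdef
  set N := r ^ (2 * v) with hNdef
  have hv3 : 3 ≤ v := by
    have hsub : ({p, q, s} : Finset ℕ) ⊆ V := by
      intro a ha
      simp only [mem_insert, mem_singleton] at ha
      rcases ha with rfl | rfl | rfl <;> assumption
    have hc3 : ({p, q, s} : Finset ℕ).card = 3 := by
      rw [card_insert_of_notMem (by simp [hpq, hps]),
        card_insert_of_notMem (by simp [hqs]), card_singleton]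
    calc 3 = ({p, q, s} : Finset ℕ).card := hc3.symm
      _ ≤ V.card := card_le_card hsub
  have hr3 : 3 ≤ r := by omega
  have hrN : r ≤ N := by
    calc r = r ^ 1 := (pow_one r).symm
      _ ≤ N := Nat.pow_le_pow_right (by omega) (by omega)
  have hNpos : 0 < N := by omega
  -- the pair p q is in no edge
  have hpq_edge : ∀ e ∈ H.edges, p ∈ e → q ∉ e := by
    intro e he hpe hqe
    apply hsh
    rw [shadowOf, mem_biUnion]
    refine ⟨e, he, mem_powersetCard.2 ⟨?_, ?_⟩⟩
    · intro a ha
      simp only [mem_insert, mem_singleton] at ha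
      rcases ha with rfl | rfl <;> assumption
    · rw [card_insert_of_notMem (by simp [hpq]), card_singleton]
  -- W : the other vertices
  set W := (V.erase p).erase q with hWdef
  have hqVp : q ∈ V.erase p := mem_erase.2 ⟨Ne.symm hpq, hq⟩
  have hWcard : W.card = v - 2 := by
    rw [hWdef, card_erase_of_mem hqVp, card_erase_of_mem hp]
    show #V - 1 - 1 = v - 2
    omega
  have hsW : s ∈ W := by
    rw [hWdef]
    exact mem_erase.2 ⟨fun h => hqs h.symm, mem_erase.2 ⟨fun h => hps h.symm, hs⟩⟩
  have hWV : W ⊆ V := fun a ha => mem_of_mem_erase (mem_of_mem_erase ha)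
  have hpW : p ∉ W := fun h => (notMem_erase p V) (mem_of_mem_erase h)
  have hqW : q ∉ W := fun h => (notMem_erase q (V.erase p)) h
  have hVeq : insert p (insert q W) = V := by
    rw [hWdef, insert_erase hqVp, insert_erase hp]
  -- the family of r-subsets
  set T := (range N).powersetCard r with hTdef
  have hexists : ∀ S : Finset ℕ, ∃ φ : ℕ → ℕ, S ∈ T →
      (Set.InjOn φ ↑V ∧ (∀ a ∈ V, φ a ∈ S) ∧ ∀ e ∈ H.edges, χ (e.image φ) = true) := by
    intro S
    by_cases hS : S ∈ T
    · rw [hTdef, mem_powersetCard] at hS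
      obtain ⟨φ, h1, h2, h3⟩ := subset_red_copy H (tripartite 1 n n) hr χ hnb S hS.1 hS.2
      exact ⟨φ, fun _ => ⟨h1, h2, h3⟩⟩
    · exact ⟨id, fun h => absurd h hS⟩
  choose F hF using hexists
  have hFS : ∀ S ∈ T, ∀ a ∈ V, F S a ∈ S := fun S hS => (hF S hS).2.1
  have hFinj : ∀ S ∈ T, Set.InjOn (F S) ↑V := fun S hS => (hF S hS).1
  have hFred : ∀ S ∈ T, ∀ e ∈ H.edges, χ (e.image (F S)) = true := fun S hS => (hF S hS).2.2
  have hTrange : ∀ S ∈ T, S ⊆ range N := fun S hS => (mem_powersetCard.1 hS).1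
  -- pigeonhole on the restriction to W
  set t := W.pi (fun _ => range N) with htdef
  have htcard : t.card = N ^ (v - 2) := by
    rw [htdef, card_pi]
    rw [prod_congr rfl (fun x _ => card_range N), prod_const, hWcard]
  have htne : t.Nonempty := ⟨fun _ _ => 0, by
    rw [htdef, mem_pi]; intro a _; exact mem_range.2 hNpos⟩
  set g : Finset ℕ → (∀ a ∈ W, ℕ) := fun S => fun w _ => F S w with hgdef
  have hmaps : ∀ S ∈ T, g S ∈ t := by
    intro S hS
    rw [htdef, mem_pi]
    intro a ha
    exact mem_range.2 (mem_range.1 (hTrange S hS (hFS S hS a (hWV ha))))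
  set C₁ := (N - v).choose (r - v) with hC₁def
  have hC₁pos : 0 < C₁ := Nat.choose_pos (by omega)
  have hTcard : T.card = N.choose r := by rw [hTdef, card_powersetCard, card_range]
  have hcount : t.card * ((2 * n * N + 1) * C₁) ≤ T.card := by
    rw [htcard, hTcard]
    have e1 : N ^ (v - 2) * ((2 * n * N + 1) * C₁) ≤ (2 * n + 1) * N ^ (v - 1) * C₁ := by
      have e2 : N ^ (v - 2) * N = N ^ (v - 1) := by
        rw [← pow_succ]; congr 1; omega
      have e3 : N ^ (v - 2) ≤ N ^ (v - 1) := Nat.pow_le_pow_right (by omega) (by omega)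
      calc N ^ (v - 2) * ((2 * n * N + 1) * C₁)
          = (2 * n * (N ^ (v - 2) * N) + N ^ (v - 2)) * C₁ := by ring
        _ = (2 * n * N ^ (v - 1) + N ^ (v - 2)) * C₁ := by rw [e2]
        _ ≤ (2 * n * N ^ (v - 1) + N ^ (v - 1)) * C₁ :=
            Nat.mul_le_mul_right _ (by omega)
        _ = (2 * n + 1) * N ^ (v - 1) * C₁ := by ring
    exact e1.trans (arith_key n r v hv3 hrv hrn)
  obtain ⟨φ₀, hφ₀t, hT₀card⟩ :=
    exists_le_card_fiber_of_mul_le_card_of_maps_to hmaps htne hcount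
  set T₀ := T.filter (fun S => g S = φ₀) with hT₀def
  have hT₀sub : T₀ ⊆ T := filter_subset _ _
  have hagree : ∀ S ∈ T₀, ∀ w, ∀ hw : w ∈ W, F S w = φ₀ w hw := by
    intro S hS w hw
    have h := (mem_filter.1 hS).2
    exact congrFun (congrFun h w) hw
  set A₀ := T₀.image (fun S => F S p) with hA₀def
  set B₀ := T₀.image (fun S => F S q) with hB₀def
  have hA₀N : A₀ ⊆ range N := by
    intro a ha
    obtain ⟨S, hS, rfl⟩ := mem_image.1 ha
    exact hTrange S (hT₀sub hS) (hFS S (hT₀sub hS) p hp)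
  have hB₀N : B₀ ⊆ range N := by
    intro a ha
    obtain ⟨S, hS, rfl⟩ := mem_image.1 ha
    exact hTrange S (hT₀sub hS) (hFS S (hT₀sub hS) q hq)
  set Wim : Finset ℕ := W.attach.image (fun w => φ₀ w.1 w.2) with hWimdef
  have hWim : ∀ S ∈ T₀, W.image (F S) = Wim := by
    intro S hS
    ext a
    rw [hWimdef, mem_image, mem_image]
    constructor
    · rintro ⟨w, hw, rfl⟩
      exact ⟨⟨w, hw⟩, mem_attach _ _, (hagree S hS w hw).symm⟩
    · rintro ⟨⟨w, hw⟩, _, rfl⟩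
      exact ⟨w, hw, hagree S hS w hw⟩
  -- fiber bound
  have hfib : ∀ ab ∈ A₀ ×ˢ B₀,
      (T₀.filter (fun S => (F S p, F S q) = ab)).card ≤ C₁ := by
    intro ab _
    rcases Finset.eq_empty_or_nonempty (T₀.filter (fun S => (F S p, F S q) = ab)) with h | h
    · rw [h, card_empty]; exact Nat.zero_le _
    obtain ⟨S₀, hS₀⟩ := h
    rw [mem_filter] at hS₀
    set P := V.image (F S₀) with hPdef
    have hS₀T : S₀ ∈ T := hT₀sub hS₀.1
    have hPcard : P.card = v := by
      rw [hPdef, card_image_of_injOn (hFinj S₀ hS₀T)]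
    have hPrange : P ⊆ range N := by
      intro a ha
      obtain ⟨b, hb, rfl⟩ := mem_image.1 ha
      exact hTrange S₀ hS₀T (hFS S₀ hS₀T b hb)
    have hclaim : T₀.filter (fun S => (F S p, F S q) = ab) ⊆
        ((range N).powersetCard r).filter (fun S => P ⊆ S) := by
      intro S hS
      rw [mem_filter] at hS
      have hST : S ∈ T := hT₀sub hS.1
      rw [mem_filter]
      refine ⟨hST, ?_⟩
      intro a ha
      obtain ⟨b, hb, rfl⟩ := mem_image.1 ha
      have hb' : b ∈ insert p (insert q W) := hVeq ▸ hb
      rw [mem_insert, mem_insert] at hb'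
      have hFb : F S₀ b = F S b := by
        rcases hb' with rfl | rfl | hbW
        · have := hS₀.2.trans hS.2.symm
          exact (Prod.mk.injEq _ _ _ _ ▸ this).1
        · have := hS₀.2.trans hS.2.symm
          exact (Prod.mk.injEq _ _ _ _ ▸ this).2
        · rw [hagree S₀ hS₀.1 b hbW, hagree S hS.1 b hbW]
      rw [hFb]
      exact hFS S hST b hb
    calc (T₀.filter (fun S => (F S p, F S q) = ab)).card
        ≤ (((range N).powersetCard r).filter (fun S => P ⊆ S)).card := card_le_card hclaim
      _ ≤ (N - P.card).choose (r - P.card) := count_supersets N r P hPrange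
      _ = C₁ := by rw [hPcard]
  have hmaps2 : ∀ S ∈ T₀, (F S p, F S q) ∈ A₀ ×ˢ B₀ := by
    intro S hS
    rw [mem_product]
    exact ⟨mem_image_of_mem _ hS, mem_image_of_mem _ hS⟩
  have hT₀le : T₀.card ≤ C₁ * (A₀ ×ˢ B₀).card :=
    card_le_mul_card_image_of_maps_to hmaps2 C₁ hfib
  have hprod : 2 * n * N + 1 ≤ A₀.card * B₀.card := by
    have h1 : (2 * n * N + 1) * C₁ ≤ (A₀.card * B₀.card) * C₁ := by
      calc (2 * n * N + 1) * C₁ ≤ T₀.card := hT₀card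
        _ ≤ C₁ * (A₀ ×ˢ B₀).card := hT₀le
        _ = (A₀.card * B₀.card) * C₁ := by rw [card_product]; ring
    exact Nat.le_of_mul_le_mul_right h1 hC₁pos
  have hA₀le : A₀.card ≤ N := by
    calc A₀.card ≤ (range N).card := card_le_card hA₀N
      _ = N := card_range N
  have hB₀le : B₀.card ≤ N := by
    calc B₀.card ≤ (range N).card := card_le_card hB₀N
      _ = N := card_range N
  have hA₀card : 2 * n + 1 ≤ A₀.card := by
    by_contra hcon
    push_neg at hcon
    have : A₀.card * B₀.card ≤ 2 * n * N :=
      Nat.mul_le_mul (by omega) hB₀le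
    omega
  have hB₀card : 2 * n + 1 ≤ B₀.card := by
    by_contra hcon
    push_neg at hcon
    have : A₀.card * B₀.card ≤ N * (2 * n) :=
      Nat.mul_le_mul hA₀le (by omega)
    have h2 : N * (2 * n) = 2 * n * N := by ring
    omega
  -- basic facts about A₀, B₀, Wim
  set c := φ₀ s hsW with hcdef
  have hcWim : c ∈ Wim := by
    rw [hWimdef, mem_image]
    exact ⟨⟨s, hsW⟩, mem_attach _ _, rfl⟩
  have hcN : c < N := by
    have := (mem_pi.1 hφ₀t) s hsW
    exact mem_range.1 this
  have hA₀Wim : ∀ a ∈ A₀, a ∉ Wim := by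
    intro a ha haW
    obtain ⟨S, hS, rfl⟩ := mem_image.1 ha
    rw [← hWim S hS, mem_image] at haW
    obtain ⟨w, hw, hweq⟩ := haW
    have : w = p := hFinj S (hT₀sub hS) (hWV hw) hp hweq
    exact hpW (this ▸ hw)
  have hB₀Wim : ∀ b ∈ B₀, b ∉ Wim := by
    intro b hb hbW
    obtain ⟨S, hS, rfl⟩ := mem_image.1 hb
    rw [← hWim S hS, mem_image] at hbW
    obtain ⟨w, hw, hweq⟩ := hbW
    have : w = q := hFinj S (hT₀sub hS) (hWV hw) hq hweq
    exact hqW (this ▸ hw)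
  have hA₀mem : ∀ a ∈ A₀, ∃ S ∈ T₀, F S p = a := by
    intro a ha
    obtain ⟨S, hS, h⟩ := mem_image.1 ha
    exact ⟨S, hS, h⟩
  have hB₀mem : ∀ b ∈ B₀, ∃ S ∈ T₀, F S q = b := by
    intro b hb
    obtain ⟨S, hS, h⟩ := mem_image.1 hb
    exact ⟨S, hS, h⟩
  have hWimmem : ∀ w, ∀ hw : w ∈ W, φ₀ w hw ∈ Wim := by
    intro w hw
    rw [hWimdef, mem_image]
    exact ⟨⟨w, hw⟩, mem_attach _ _, rfl⟩
  have hc_eq : φ₀ s hsW = c := hcdef.symm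
  have hWmem : ∀ w, w ∈ V → w ≠ p → w ≠ q → w ∈ W := by
    intro w h hp' hq'
    rw [hWdef]
    exact mem_erase.2 ⟨hq', mem_erase.2 ⟨hp', h⟩⟩
  have hedgeV : ∀ e ∈ H.edges, ∀ w ∈ e, w ∈ V := fun e he w hw => H.subset_verts e he hw
  -- case split
  clear_value V v N W T t g C₁ T₀ A₀ B₀ Wim c
  clear hF hmaps hfib hcount hT₀le hT₀card htcard htne hmaps2 hprod hTcard hTdef htdef hgdef hT₀def hWdef hC₁def hNdef hVdef hvdef hWimdef hcdef
  by_cases hcase : ∃ a ∈ A₀, ∃ b ∈ B₀, a ≠ b ∧ χ (insert a (insert b ({c} : Finset ℕ))) = true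
  · -- build the red copy
    obtain ⟨a, ha, b, hb, hab, hχ⟩ := hcase
    obtain ⟨Sa, hSa, hFa⟩ := hA₀mem a ha
    obtain ⟨Sb, hSb, hFb⟩ := hB₀mem b hb
    have hSaT : Sa ∈ T := hT₀sub hSa
    have hSbT : Sb ∈ T := hT₀sub hSb
    set φ : ℕ → ℕ := fun w => if w = q then b else F Sa w with hφdef
    have hφp : φ p = a := by
      simp only [hφdef]
      rw [if_neg hpq]
      exact hFa
    have hφq : φ q = b := by simp only [hφdef]; simp
    have hφW : ∀ w ∈ W, φ w = F Sa w := by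
      intro w hw
      simp only [hφdef]
      rw [if_neg (show ¬ w = q from fun h => hqW (h ▸ hw))]
    have hφWb : ∀ w, ∀ hw : w ∈ W, φ w = φ₀ w hw := by
      intro w hw
      rw [hφW w hw, hagree Sa hSa w hw]
    have hbWim : b ∉ Wim := hB₀Wim b hb
    refine ⟨φ, ?_, ?_, ?_, ?_⟩
    · -- injectivity
      intro u hu u' hu' heq
      simp only [Finset.coe_insert, Set.mem_insert_iff, Finset.mem_coe] at hu hu'
      have hu2 : u ∈ insert p (insert q W) := hVeq ▸ hu
      have hu2' : u' ∈ insert p (insert q W) := hVeq ▸ hu'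
      by_cases h1 : u = q <;> by_cases h2 : u' = q
      · rw [h1, h2]
      · exfalso
        rw [h1, hφq] at heq
        rw [mem_insert, mem_insert] at hu2'
        rcases hu2' with rfl | h2' | hW'
        · rw [hφp] at heq; exact hab heq.symm
        · exact h2 h2'
        · rw [hφWb u' hW'] at heq
          exact hbWim (heq ▸ hWimmem u' hW')
      · exfalso
        rw [h2, hφq] at heq
        rw [mem_insert, mem_insert] at hu2
        rcases hu2 with rfl | h1' | hW'
        · rw [hφp] at heq; exact hab heq
        · exact h1 h1'
        · rw [hφWb u hW'] at heq
          exact hbWim (heq ▸ hWimmem u hW')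
      · have e1 : φ u = F Sa u := by simp only [hφdef]; rw [if_neg h1]
        have e2 : φ u' = F Sa u' := by simp only [hφdef]; rw [if_neg h2]
        rw [e1, e2] at heq
        exact hFinj Sa hSaT hu hu' heq
    · -- bounds
      intro u hu
      by_cases h1 : u = q
      · rw [h1, hφq]
        exact mem_range.1 (hB₀N hb)
      · have e1 : φ u = F Sa u := by simp only [hφdef]; rw [if_neg h1]
        rw [e1]
        exact mem_range.1 (hTrange Sa hSaT (hFS Sa hSaT u hu))
    · -- edges
      intro e he
      by_cases hqe : q ∈ e
      · have hpe : p ∉ e := fun hpe => hpq_edge e he hpe hqe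
        have himg : e.image φ = e.image (F Sb) := by
          apply image_congr
          intro w hw
          by_cases h1 : w = q
          · rw [h1, hφq, ← hFb]
          · have hwW : w ∈ W :=
              hWmem w (hedgeV e he w hw) (fun h => hpe (h ▸ hw)) h1
            rw [hφWb w hwW, (hagree Sb hSb w hwW)]
        rw [himg]
        exact hFred Sb hSbT e he
      · have himg : e.image φ = e.image (F Sa) := by
          apply image_congr
          intro w hw
          simp only [hφdef]
          rw [if_neg (show ¬ w = q from fun h => hqe (h ▸ hw))]
        rw [himg]
        exact hFred Sa hSaT e he
    · -- the extra triple
      have himg : ({p, q, s} : Finset ℕ).image φ = insert a (insert b ({c} : Finset ℕ)) := by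
        rw [image_insert, image_insert, image_singleton, hφp, hφq]
        have : φ s = c := by
          rw [hφWb s hsW, hc_eq]
        rw [this]
      rw [himg]
      exact hχ
  · -- build the blue K_{1,n,n} : contradiction
    exfalso
    push_neg at hcase
    have hblue : ∀ a ∈ A₀, ∀ b ∈ B₀, a ≠ b →
        χ (insert a (insert b ({c} : Finset ℕ))) = false := by
      intro a ha b hb hab
      have := hcase a ha b hb hab
      exact Bool.not_eq_true _ ▸ (by simpa using this)
    obtain ⟨B', hB'sub, hB'card⟩ := exists_subset_card_eq (show n ≤ B₀.card by omega)
    have hAd : n ≤ (A₀ \ B').card := by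
      have := le_card_sdiff B' A₀
      omega
    obtain ⟨A', hA'sub, hA'card⟩ := exists_subset_card_eq hAd
    have hA'A₀ : A' ⊆ A₀ := hA'sub.trans (sdiff_subset)
    have hA'B' : ∀ x ∈ A', x ∉ B' := by
      intro x hx
      exact (mem_sdiff.1 (hA'sub hx)).2
    obtain ⟨fA, hfA1, hfA2⟩ : ∃ f : ℕ → ℕ, (∀ i, i < n → f i ∈ A') ∧
        (∀ i j, i < n → j < n → f i = f j → i = j) := by
      refine ⟨fun i => if h : i < n then A'.orderEmbOfFin hA'card ⟨i, h⟩ else 0, ?_, ?_⟩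
      · intro i h
        simp only [dif_pos h]
        exact A'.orderEmbOfFin_mem hA'card _
      · intro i j hi hj h
        simp only [dif_pos hi, dif_pos hj] at h
        exact Fin.mk.inj_iff.mp ((A'.orderEmbOfFin hA'card).injective h)
    obtain ⟨fB, hfB1, hfB2⟩ : ∃ f : ℕ → ℕ, (∀ i, i < n → f i ∈ B') ∧
        (∀ i j, i < n → j < n → f i = f j → i = j) := by
      refine ⟨fun i => if h : i < n then B'.orderEmbOfFin hB'card ⟨i, h⟩ else 0, ?_, ?_⟩
      · intro i h
        simp only [dif_pos h]
        exact B'.orderEmbOfFin_mem hB'card _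
      · intro i j hi hj h
        simp only [dif_pos hi, dif_pos hj] at h
        exact Fin.mk.inj_iff.mp ((B'.orderEmbOfFin hB'card).injective h)
    set ψ : ℕ → ℕ := fun i =>
      if i = 0 then c else if i < 1 + n then fA (i - 1) else fB (i - (1 + n)) with hψdef
    have hψ0 : ψ 0 = c := by simp only [hψdef]; simp
    have hψA : ∀ i, 1 ≤ i → i < 1 + n → ψ i ∈ A' := by
      intro i h1 h2
      have : ψ i = fA (i - 1) := by
        simp only [hψdef]
        rw [if_neg (show ¬ i = 0 by omega), if_pos h2]
      rw [this]
      exact hfA1 _ (by omega)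
    have hψB : ∀ i, 1 + n ≤ i → i < 1 + n + n → ψ i ∈ B' := by
      intro i h1 h2
      have : ψ i = fB (i - (1 + n)) := by
        simp only [hψdef]
        rw [if_neg (show ¬ i = 0 by omega), if_neg (show ¬ i < 1 + n by omega)]
      rw [this]
      exact hfB1 _ (by omega)
    have hcA' : c ∉ A' := fun h => hA₀Wim c (hA'A₀ h) hcWim
    have hcB' : c ∉ B' := fun h => hB₀Wim c (hB'sub h) hcWim
    apply hnb
    refine ⟨ψ, ?_, ?_, ?_⟩
    · -- injective
      intro i hi j hj heq
      simp only [Finset.mem_coe] at hi hj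
      have hi' : i < 1 + n + n := mem_range.1 hi
      have hj' : j < 1 + n + n := mem_range.1 hj
      by_cases h1 : i = 0 <;> by_cases h2 : j = 0
      · omega
      · exfalso
        rw [h1, hψ0] at heq
        by_cases h3 : j < 1 + n
        · exact hcA' (heq ▸ hψA j (by omega) h3)
        · exact hcB' (heq ▸ hψB j (by omega) hj')
      · exfalso
        rw [h2, hψ0] at heq
        by_cases h3 : i < 1 + n
        · exact hcA' (heq ▸ (hψA i (by omega) h3))
        · exact hcB' (heq ▸ (hψB i (by omega) hi'))
      · by_cases h3 : i < 1 + n <;> by_cases h4 : j < 1 + n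
        · have e1 : ψ i = fA (i - 1) := by
            simp only [hψdef]; rw [if_neg h1, if_pos h3]
          have e2 : ψ j = fA (j - 1) := by
            simp only [hψdef]; rw [if_neg h2, if_pos h4]
          rw [e1, e2] at heq
          have := hfA2 _ _ (show i - 1 < n by omega) (show j - 1 < n by omega) heq
          omega
        · exfalso
          have m1 : ψ i ∈ A' := hψA i (by omega) h3
          have m2 : ψ j ∈ B' := hψB j (by omega) hj'
          exact hA'B' _ m1 (heq ▸ m2)
        · exfalso
          have m1 : ψ i ∈ B' := hψB i (by omega) hi'
          have m2 : ψ j ∈ A' := hψA j (by omega) h4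
          exact hA'B' _ m2 (heq ▸ m1)
        · have e1 : ψ i = fB (i - (1 + n)) := by
            simp only [hψdef]; rw [if_neg h1, if_neg h3]
          have e2 : ψ j = fB (j - (1 + n)) := by
            simp only [hψdef]; rw [if_neg h2, if_neg h4]
          rw [e1, e2] at heq
          have := hfB2 _ _ (show i - (1 + n) < n by omega)
            (show j - (1 + n) < n by omega) heq
          omega
    · -- bounds
      intro i hi
      have hi' : i < 1 + n + n := mem_range.1 hi
      by_cases h1 : i = 0
      · rw [h1, hψ0]; exact hcN
      · by_cases h3 : i < 1 + n
        · exact mem_range.1 (hA₀N (hA'A₀ (hψA i (by omega) h3)))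
        · exact mem_range.1 (hB₀N (hB'sub (hψB i (by omega) hi')))
    · -- blue edges
      intro e he
      obtain ⟨i, j, hi1, hi2, hj1, hj2, rfl⟩ := trip_edge_decomp he
      have ha' : ψ i ∈ A₀ := hA'A₀ (hψA i hi1 hi2)
      have hb' : ψ j ∈ B₀ := hB'sub (hψB j hj1 hj2)
      have hab : ψ i ≠ ψ j := by
        intro h
        exact hA'B' _ (hψA i hi1 hi2) (h ▸ hψB j hj1 hj2)
      have himg : ({0, i, j} : Finset ℕ).image ψ
          = insert (ψ i) (insert (ψ j) ({c} : Finset ℕ)) := by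
        rw [image_insert, image_insert, image_singleton, hψ0]
        ext a
        simp only [mem_insert, mem_singleton]
        tauto
      rw [himg]
      exact hblue _ ha' _ hb' hab

end AuxiliaryForStatement12

open Finset in
/-- Let `H` be a 3-graph with at least one edge, `x, y, z ∈ V(H)` distinct
with `{x,y,z} ∉ E(H)` such that at least one of the pairs `{x,y}, {y,z}, {x,z}` is not in the
shadow `∂H`, and let `H'` be `H` with the edge `{x,y,z}` added. Then
`r(H', K_{1,n,n}^{(3)}) ≤ r(H, K_{1,n,n}^{(3)})^{2 v(H)}`. -/
theorem ramsey_add_edge (H : ThreeGraph) (hne : H.edges.Nonempty) (x y z : ℕ)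
    (hx : x ∈ H.verts) (hy : y ∈ H.verts) (hz : z ∈ H.verts)
    (hxy : x ≠ y) (hyz : y ≠ z) (hxz : x ≠ z)
    (hnotedge : ({x, y, z} : Finset ℕ) ∉ H.edges)
    (hshadow : ({x, y} : Finset ℕ) ∉ shadowOf H.edges ∨
      ({y, z} : Finset ℕ) ∉ shadowOf H.edges ∨ ({x, z} : Finset ℕ) ∉ shadowOf H.edges)
    (H' : ThreeGraph) (hv : H'.verts = H.verts)
    (he : H'.edges = insert ({x, y, z} : Finset ℕ) H.edges)
    (n : ℕ) (hn : 1 ≤ n) :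
    ramsey H' (tripartite 1 n n) ≤ ramsey H (tripartite 1 n n) ^ (2 * H.verts.card) := by
  classical
  set SH := {N : ℕ | ∀ χ : Finset ℕ → Bool,
    hasMonoCopy N χ H true ∨ hasMonoCopy N χ (tripartite 1 n n) false} with hSHdef
  set SH' := {N : ℕ | ∀ χ : Finset ℕ → Bool,
    hasMonoCopy N χ H' true ∨ hasMonoCopy N χ (tripartite 1 n n) false} with hSH'def
  have hsub : SH' ⊆ SH := by
    intro N hN χ
    rcases hN χ with ⟨φ, h1, h2, h3⟩ | hb
    · left
      refine ⟨φ, ?_, ?_, ?_⟩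
      · rw [← hv]; exact h1
      · intro a ha; exact h2 a (hv ▸ ha)
      · intro e hee
        exact h3 e (he ▸ mem_insert_of_mem hee)
    · right; exact hb
  have hram : ramsey H (tripartite 1 n n) = sInf SH := rfl
  have hram' : ramsey H' (tripartite 1 n n) = sInf SH' := rfl
  rcases Set.eq_empty_or_nonempty SH with hSHe | hSHne
  · have h1 : SH' = ∅ := Set.subset_eq_empty hsub hSHe
    rw [hram', h1, Nat.sInf_empty]
    exact Nat.zero_le _
  · set r := sInf SH with hrdef
    have hrmem : r ∈ SH := Nat.sInf_mem hSHne
    have hrmem' : ∀ χ : Finset ℕ → Bool,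
        hasMonoCopy r χ H true ∨ hasMonoCopy r χ (tripartite 1 n n) false := hrmem
    obtain ⟨hrv, hrn⟩ := ramsey_mem_lower H hne hn hrmem'
    have hkey : r ^ (2 * H.verts.card) ∈ SH' := by
      intro χ
      by_cases hb : hasMonoCopy (r ^ (2 * H.verts.card)) χ (tripartite 1 n n) false
      · right; exact hb
      left
      have hmain : ∃ φ : ℕ → ℕ, Set.InjOn φ ↑H.verts ∧
          (∀ a ∈ H.verts, φ a < r ^ (2 * H.verts.card)) ∧
          (∀ e ∈ H.edges, χ (e.image φ) = true) ∧
          χ (({x, y, z} : Finset ℕ).image φ) = true := by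
        rcases hshadow with hsh | hsh | hsh
        · obtain ⟨φ, h1, h2, h3, h4⟩ :=
            core_lemma H hn x y z hx hy hz hxy hyz hxz hsh hrmem' hrv hrn χ hb
          exact ⟨φ, h1, h2, h3, h4⟩
        · obtain ⟨φ, h1, h2, h3, h4⟩ :=
            core_lemma H hn y z x hy hz hx hyz (Ne.symm hxz) (Ne.symm hxy) hsh hrmem' hrv hrn χ hb
          refine ⟨φ, h1, h2, h3, ?_⟩
          have : ({y, z, x} : Finset ℕ) = ({x, y, z} : Finset ℕ) := by
            ext a; simp only [mem_insert, mem_singleton]; tauto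
          rwa [this] at h4
        · obtain ⟨φ, h1, h2, h3, h4⟩ :=
            core_lemma H hn x z y hx hz hy hxz (Ne.symm hyz) hxy hsh hrmem' hrv hrn χ hb
          refine ⟨φ, h1, h2, h3, ?_⟩
          have : ({x, z, y} : Finset ℕ) = ({x, y, z} : Finset ℕ) := by
            ext a; simp only [mem_insert, mem_singleton]; tauto
          rwa [this] at h4
      obtain ⟨φ, h1, h2, h3, h4⟩ := hmain
      refine ⟨φ, ?_, ?_, ?_⟩
      · rw [hv]; exact h1
      · intro a ha; exact h2 a (hv ▸ ha)
      · intro e hee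
        rw [he, mem_insert] at hee
        rcases hee with rfl | hee
        · exact h4
        · exact h3 e hee
    rw [hram', hram]
    exact Nat.sInf_le hkey
end
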